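/- arXiv:math/0306393 — 9 statements merged into one kernel-verified Lean document; each statement's English description precedes it below -/
import Mathlib

section
/- The ring of invariants C[X^{±1}, P^{±1}]^{Z_2}, where Z_2 acts by inverting both X and P, is generated by the elements I_1 = X + X^{-1}, I_2 = P + P^{-1}, I_3 = XP + X^{-1}P^{-1}, and these satisfy the relation I_1 I_2 I_3 = I_1^2 + I_2^2 + I_3^2 - 4. -/
open AddMonoidAlgebra

/-- The Laurent polynomial ring `ℂ[X^{±1}, P^{±1}]`, realized as the group algebra
of `ℤ × ℤ` over `ℂ`. -/
abbrev LaurentTwo : Type := AddMonoidAlgebra ℂ (ℤ × ℤ)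

/-- The generator of the `ℤ/2`-action: the algebra automorphism sending
`X ↦ X⁻¹`, `P ↦ P⁻¹`, induced by negation on the lattice `ℤ × ℤ`. -/
noncomputable def invAction : LaurentTwo ≃ₐ[ℂ] LaurentTwo :=
  AddMonoidAlgebra.domCongr ℂ ℂ (AddEquiv.neg (ℤ × ℤ))

/-- The symmetrized monomial `x^v + x^{-v}`. -/
noncomputable def sEl (v : ℤ × ℤ) : LaurentTwo :=
  AddMonoidAlgebra.single v 1 + AddMonoidAlgebra.single (-v) 1

lemma sEl_neg (v : ℤ × ℤ) : sEl (-v) = sEl v := by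
  simp [sEl, add_comm]

lemma sEl_mul (v w : ℤ × ℤ) : sEl v * sEl w = sEl (v + w) + sEl (v - w) := by
  simp only [sEl, add_mul, mul_add, AddMonoidAlgebra.single_mul_single, one_mul]
  rw [show -v + -w = -(v+w) by abel, show v + -w = v - w by abel,
      show -v + w = -(v - w) by abel]
  abel

lemma sEl_zero : sEl (0, 0) = 2 := by
  have : sEl (0, 0) = AddMonoidAlgebra.single (0 : ℤ × ℤ) (1:ℂ)
      + AddMonoidAlgebra.single (0 : ℤ × ℤ) (1:ℂ) := rfl
  rw [this, ← AddMonoidAlgebra.one_def, one_add_one_eq_two]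

/-- Key lemma: every symmetrized monomial lies in any subalgebra containing the
three basic ones. -/
lemma sEl_mem (A : Subalgebra ℂ LaurentTwo)
    (h10 : sEl (1, 0) ∈ A) (h01 : sEl (0, 1) ∈ A) (h11 : sEl (1, 1) ∈ A) :
    ∀ v : ℤ × ℤ, sEl v ∈ A := by
  have h00 : sEl (0, 0) ∈ A := by
    rw [sEl_zero, ← one_add_one_eq_two]; exact A.add_mem A.one_mem A.one_mem
  have step : ∀ g w : ℤ × ℤ, sEl g ∈ A → sEl (w - g) ∈ A → sEl (w - g - g) ∈ A →
      sEl w ∈ A := by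
    intro g w hg hs1 hs2
    have hm := sEl_mul g (w - g)
    rw [show g + (w - g) = w by abel, show g - (w - g) = -(w - g - g) by abel,
      sEl_neg] at hm
    have : sEl w = sEl g * sEl (w - g) - sEl (w - g - g) := by rw [hm]; abel
    rw [this]
    exact A.sub_mem (A.mul_mem hg hs1) hs2
  have h1m : sEl (1, -1) ∈ A := by
    have hm := sEl_mul (1, 0) (0, 1)
    rw [show ((1:ℤ), (0:ℤ)) + (0, 1) = (1, 1) from rfl,
      show ((1:ℤ), (0:ℤ)) - (0, 1) = (1, -1) from rfl] at hm
    have : sEl (1, -1) = sEl (1, 0) * sEl (0, 1) - sEl (1, 1) := by rw [hm]; abel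
    rw [this]
    exact A.sub_mem (A.mul_mem h10 h01) h11
  have h11' : sEl (-1, -1) ∈ A := by
    rw [show ((-1, -1) : ℤ × ℤ) = -(1, 1) from rfl, sEl_neg]; exact h11
  have h1m' : sEl (-1, 1) ∈ A := by
    rw [show ((-1, 1) : ℤ × ℤ) = -(1, -1) from rfl, sEl_neg]; exact h1m
  have h10m : sEl (-1, 0) ∈ A := by
    rw [show ((-1, 0) : ℤ × ℤ) = -(1, 0) from rfl, sEl_neg]; exact h10
  have h01m : sEl (0, -1) ∈ A := by
    rw [show ((0, -1) : ℤ × ℤ) = -(0, 1) from rfl, sEl_neg]; exact h01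
  have key : ∀ n : ℕ, ∀ a b : ℤ, a.natAbs + b.natAbs = n → sEl (a, b) ∈ A := by
    intro n
    induction n using Nat.strong_induction_on with
    | _ n ih =>
      intro a b hv
      have use : ∀ g1 g2 : ℤ, sEl (g1, g2) ∈ A →
          (a - g1).natAbs + (b - g2).natAbs < n →
          (a - g1 - g1).natAbs + (b - g2 - g2).natAbs < n →
          sEl (a, b) ∈ A := by
        intro g1 g2 hg hlt1 hlt2
        refine step (g1, g2) (a, b) hg ?_ ?_
        · exact ih _ hlt1 (a - g1) (b - g2) rfl
        · exact ih _ hlt2 (a - g1 - g1) (b - g2 - g2) rfl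
      rcases lt_trichotomy a 0 with ha | ha | ha
      · rcases lt_trichotomy b 0 with hb | hb | hb
        · by_cases hab : a = -1 ∧ b = -1
          · rw [hab.1, hab.2]; exact h11'
          · exact use (-1) (-1) h11' (by omega) (by omega)
        · subst hb
          by_cases haa : a = -1
          · subst haa; exact h10m
          · exact use (-1) 0 h10m (by omega) (by omega)
        · by_cases hab : a = -1 ∧ b = 1
          · rw [hab.1, hab.2]; exact h1m'
          · exact use (-1) 1 h1m' (by omega) (by omega)
      · subst ha
        rcases lt_trichotomy b 0 with hb | hb | hb
        · by_cases hbb : b = -1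
          · subst hbb; exact h01m
          · exact use 0 (-1) h01m (by omega) (by omega)
        · subst hb; exact h00
        · by_cases hbb : b = 1
          · subst hbb; exact h01
          · exact use 0 1 h01 (by omega) (by omega)
      · rcases lt_trichotomy b 0 with hb | hb | hb
        · by_cases hab : a = 1 ∧ b = -1
          · rw [hab.1, hab.2]; exact h1m
          · exact use 1 (-1) h1m (by omega) (by omega)
        · subst hb
          by_cases haa : a = 1
          · subst haa; exact h10
          · exact use 1 0 h10 (by omega) (by omega)
        · by_cases hab : a = 1 ∧ b = 1
          · rw [hab.1, hab.2]; exact h11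
          · exact use 1 1 h11 (by omega) (by omega)
  intro v
  exact key (v.1.natAbs + v.2.natAbs) v.1 v.2 rfl

lemma invariant_decomp (f : LaurentTwo) (hf : ∀ w : ℤ × ℤ, f.coeff (-w) = f.coeff w) :
    f = (2⁻¹ : ℂ) • ∑ v ∈ f.coeff.support, f.coeff v • sEl v := by
  ext w
  rw [AddMonoidAlgebra.coeff_smul_apply, AddMonoidAlgebra.coeff_sum, Finsupp.finset_sum_apply]
  have h1 : ∀ x : ℤ × ℤ, (f.coeff x • sEl x).coeff w
      = (if x = w then f.coeff x else 0) + (if x = -w then f.coeff x else 0) := by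
    intro x
    show f.coeff x • (sEl x).coeff w = _
    rw [show (sEl x).coeff w = (AddMonoidAlgebra.single x (1:ℂ)).coeff w
        + (AddMonoidAlgebra.single (-x) (1:ℂ)).coeff w from rfl]
    rw [AddMonoidAlgebra.coeff_single, AddMonoidAlgebra.coeff_single, Finsupp.single_apply, Finsupp.single_apply]
    simp only [neg_eq_iff_eq_neg, smul_eq_mul]
    split_ifs <;> ring
  rw [Finset.sum_congr rfl fun x _ => h1 x, Finset.sum_add_distrib,
    Finset.sum_ite_eq' f.coeff.support w, Finset.sum_ite_eq' f.coeff.support (-w)]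
  simp only [Finsupp.mem_support_iff, hf]
  by_cases h : f.coeff w = 0 <;> simp [h] <;> ring

/-- The ring of invariants `ℂ[X^{±1},P^{±1}]^{ℤ/2}` (for the action
inverting both `X` and `P`) is generated as a `ℂ`-algebra by
`I₁ = X + X⁻¹`, `I₂ = P + P⁻¹`, `I₃ = XP + X⁻¹P⁻¹`, and these satisfy
`I₁I₂I₃ = I₁² + I₂² + I₃² - 4`. -/
theorem invariants_generators_and_relation
    (I₁ I₂ I₃ : LaurentTwo)
    (hI₁ : I₁ = AddMonoidAlgebra.single ((1 : ℤ), (0 : ℤ)) (1 : ℂ)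
      + AddMonoidAlgebra.single ((-1 : ℤ), (0 : ℤ)) (1 : ℂ))
    (hI₂ : I₂ = AddMonoidAlgebra.single ((0 : ℤ), (1 : ℤ)) (1 : ℂ)
      + AddMonoidAlgebra.single ((0 : ℤ), (-1 : ℤ)) (1 : ℂ))
    (hI₃ : I₃ = AddMonoidAlgebra.single ((1 : ℤ), (1 : ℤ)) (1 : ℂ)
      + AddMonoidAlgebra.single ((-1 : ℤ), (-1 : ℤ)) (1 : ℂ)) :
    (Algebra.adjoin ℂ {I₁, I₂, I₃} : Set LaurentTwo) = {f | invAction f = f} ∧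
    I₁ * I₂ * I₃ = I₁ ^ 2 + I₂ ^ 2 + I₃ ^ 2 - 4 := by
  have hs1 : sEl (1, 0) = I₁ := by rw [hI₁]; rfl
  have hs2 : sEl (0, 1) = I₂ := by rw [hI₂]; rfl
  have hs3 : sEl (1, 1) = I₃ := by rw [hI₃]; rfl
  constructor
  · ext f
    simp only [SetLike.mem_coe, Set.mem_setOf_eq]
    constructor
    · intro hf
      have hle : Algebra.adjoin ℂ {I₁, I₂, I₃}
          ≤ AlgHom.equalizer (invAction.toAlgHom : LaurentTwo →ₐ[ℂ] LaurentTwo)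
            (AlgHom.id ℂ LaurentTwo) := by
        rw [Algebra.adjoin_le_iff]
        have inv1 : ∀ v : ℤ × ℤ, invAction (sEl v) = sEl v := by
          intro v
          simp only [invAction, sEl, map_add, AddMonoidAlgebra.domCongr_single,
            AddEquiv.neg_apply, neg_neg]
          abel
        have mem : ∀ v : ℤ × ℤ, sEl v ∈ AlgHom.equalizer
            (invAction.toAlgHom : LaurentTwo →ₐ[ℂ] LaurentTwo) (AlgHom.id ℂ LaurentTwo) :=
          fun v => (AlgHom.mem_equalizer _ _ _).mpr (by simpa using inv1 v)
        rintro x hx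
        simp only [Set.mem_insert_iff, Set.mem_singleton_iff] at hx
        rcases hx with rfl | rfl | rfl
        · rw [hI₁]; exact mem (1, 0)
        · rw [hI₂]; exact mem (0, 1)
        · rw [hI₃]; exact mem (1, 1)
      exact hle hf
    · intro hf
      have hsym : ∀ w : ℤ × ℤ, f.coeff (-w) = f.coeff w := by
        intro w
        calc f.coeff (-w) = (invAction f).coeff w := by
              simp [invAction, AddMonoidAlgebra.coeff_domCongr]
          _ = f.coeff w := by rw [hf]
      rw [invariant_decomp f hsym]
      refine Subalgebra.smul_mem _ (Subalgebra.sum_mem _ fun v _ =>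
        Subalgebra.smul_mem _ ?_ _) _
      refine sEl_mem _ ?_ ?_ ?_ v
      · rw [hs1]; exact Algebra.subset_adjoin (by simp)
      · rw [hs2]; exact Algebra.subset_adjoin (by simp)
      · rw [hs3]; exact Algebra.subset_adjoin (by simp)
  · have h4 : (4 : LaurentTwo) = AddMonoidAlgebra.single ((0:ℤ), (0:ℤ)) (1:ℂ)
        + AddMonoidAlgebra.single ((0:ℤ), (0:ℤ)) (1:ℂ)
        + AddMonoidAlgebra.single ((0:ℤ), (0:ℤ)) (1:ℂ)
        + AddMonoidAlgebra.single ((0:ℤ), (0:ℤ)) (1:ℂ) := by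
      rw [show ((0:ℤ), (0:ℤ)) = (0 : ℤ × ℤ) from rfl, ← AddMonoidAlgebra.one_def]
      norm_num
    rw [hI₁, hI₂, hI₃, h4]
    simp only [pow_two, add_mul, mul_add, AddMonoidAlgebra.single_mul_single, one_mul,
      Prod.mk_add_mk, show (1:ℤ)+0 = 1 from rfl, show (0:ℤ)+1 = 1 from rfl,
      show (1:ℤ)+1 = 2 from rfl, show (1:ℤ)+(-1) = 0 from rfl, show (-1:ℤ)+1 = 0 from rfl,
      show (-1:ℤ)+(-1) = -2 from rfl, show (0:ℤ)+0 = 0 from rfl,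
      show (0:ℤ)+(-1) = -1 from rfl, show (-1:ℤ)+0 = -1 from rfl]
    abel
end

section
/- The map from (C^*)^2 to the affine cubic surface {(x1,x2,x3) in C^3 : x1 x2 x3 = x1^2 + x2^2 + x3^2 - 4} given by (z1, z2) ↦ (z1 + z1^{-1}, z2 + z2^{-1}, z1 z2 + z1^{-1} z2^{-1}) is surjective, and two points have the same image if and only if they are related by the inversion (z1, z2) ↦ (z1^{-1}, z2^{-1}). -/
/-- For any `x : ℂ` there is a unit `u` with `u + u⁻¹ = x`. -/
lemma exists_unit_add_inv (x : ℂ) : ∃ u : ℂˣ, (u : ℂ) + ((u⁻¹ : ℂˣ) : ℂ) = x := by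
  obtain ⟨s, hs⟩ := IsAlgClosed.exists_pow_nat_eq (x ^ 2 - 4) (n := 2) (by norm_num)
  have hmul : ((x + s) / 2) * ((x - s) / 2) = 1 := by
    have : s ^ 2 = x ^ 2 - 4 := hs
    field_simp
    linear_combination -this
  refine ⟨Units.mkOfMulEqOne _ _ hmul, ?_⟩
  show (x + s) / 2 + (x - s) / 2 = x
  ring

/-- The map `(z₁, z₂) ↦ (z₁ + z₁⁻¹, z₂ + z₂⁻¹, z₁z₂ + z₁⁻¹z₂⁻¹)` from
`(ℂ*)²` to the affine cubic surface `x₁x₂x₃ = x₁² + x₂² + x₃² - 4` is surjective, and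
two points have the same image iff they are related by inversion of both coordinates. -/
theorem torus_quotient_cubic
    (f : ℂˣ × ℂˣ → ℂ × ℂ × ℂ)
    (hf : ∀ z : ℂˣ × ℂˣ,
      f z = ((z.1 : ℂ) + (z.1⁻¹ : ℂˣ), (z.2 : ℂ) + (z.2⁻¹ : ℂˣ),
        (z.1 : ℂ) * z.2 + ((z.1⁻¹ : ℂˣ) : ℂ) * (z.2⁻¹ : ℂˣ))) :
    (∀ x₁ x₂ x₃ : ℂ, x₁ * x₂ * x₃ = x₁ ^ 2 + x₂ ^ 2 + x₃ ^ 2 - 4 →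
      ∃ z : ℂˣ × ℂˣ, f z = (x₁, x₂, x₃)) ∧
    (∀ z w : ℂˣ × ℂˣ, f z = f w ↔ (w = z ∨ w = (z.1⁻¹, z.2⁻¹))) := by
  constructor
  · intro x₁ x₂ x₃ hc
    obtain ⟨u, hu⟩ := exists_unit_add_inv x₁
    obtain ⟨v, hv⟩ := exists_unit_add_inv x₂
    set a : ℂ := (u : ℂ) with ha
    set a' : ℂ := ((u⁻¹ : ℂˣ) : ℂ) with ha'
    set c : ℂ := (v : ℂ) with hcv
    set c' : ℂ := ((v⁻¹ : ℂˣ) : ℂ) with hcv'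
    have haa : a * a' = 1 := by
      rw [ha, ha', ← Units.val_mul, mul_inv_cancel, Units.val_one]
    have hcc : c * c' = 1 := by
      rw [hcv, hcv', ← Units.val_mul, mul_inv_cancel, Units.val_one]
    have hsum : (a * c + a' * c') + (a * c' + a' * c) = x₁ * x₂ := by
      linear_combination (c + c') * hu + x₁ * hv
    have hprod : (a * c + a' * c') * (a * c' + a' * c) = x₁ ^ 2 + x₂ ^ 2 - 4 := by
      linear_combination (a ^ 2 + a' ^ 2 - 2) * hcc + (c ^ 2 + c' ^ 2 - 2) * haa +
        (a + a' + x₁) * hu + (c + c' + x₂) * hv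
    have hkey : (x₃ - (a * c + a' * c')) * (x₃ - (a * c' + a' * c)) = 0 := by
      linear_combination (-x₃) * hsum + hprod - hc
    rcases mul_eq_zero.1 hkey with h3 | h3
    · refine ⟨(u, v), ?_⟩
      rw [hf]
      have h3' : x₃ = a * c + a' * c' := sub_eq_zero.1 h3
      exact Prod.ext hu (Prod.ext hv (by rw [h3']))
    · refine ⟨(u, v⁻¹), ?_⟩
      rw [hf]
      have hx3 : x₃ = a * c' + a' * c := sub_eq_zero.1 h3
      refine Prod.ext hu (Prod.ext ?_ ?_)
      · show c' + ((v⁻¹⁻¹ : ℂˣ) : ℂ) = x₂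
        rw [inv_inv]
        rw [← hv]; ring
      · show a * c' + a' * ((v⁻¹⁻¹ : ℂˣ) : ℂ) = x₃
        rw [inv_inv, ← hcv, hx3]
  · intro z w
    set p : ℂ := (z.1 : ℂ) with hp
    set p' : ℂ := ((z.1⁻¹ : ℂˣ) : ℂ) with hp'
    set q : ℂ := (z.2 : ℂ) with hq
    set q' : ℂ := ((z.2⁻¹ : ℂˣ) : ℂ) with hq'
    have hpp : p * p' = 1 := by
      rw [hp, hp', ← Units.val_mul, mul_inv_cancel, Units.val_one]
    have hqq : q * q' = 1 := by
      rw [hq, hq', ← Units.val_mul, mul_inv_cancel, Units.val_one]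
    constructor
    · intro hfw
      rw [hf z, hf w] at hfw
      set r : ℂ := (w.1 : ℂ) with hr
      set r' : ℂ := ((w.1⁻¹ : ℂˣ) : ℂ) with hr'
      set s : ℂ := (w.2 : ℂ) with hs
      set s' : ℂ := ((w.2⁻¹ : ℂˣ) : ℂ) with hs'
      have hrr : r * r' = 1 := by
        rw [hr, hr', ← Units.val_mul, mul_inv_cancel, Units.val_one]
      have hss : s * s' = 1 := by
        rw [hs, hs', ← Units.val_mul, mul_inv_cancel, Units.val_one]
      obtain ⟨e1, e2, e3⟩ : p + p' = r + r' ∧ q + q' = s + s' ∧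
          p * q + p' * q' = r * s + r' * s' := by
        have h1 := congrArg Prod.fst hfw
        have h2 := congrArg (fun t => t.2.1) hfw
        have h3 := congrArg (fun t => t.2.2) hfw
        exact ⟨h1, h2, h3⟩
      have h1 : (r - p) * (r - p') = 0 := by
        linear_combination (-r) * e1 + hpp - hrr
      have h2 : (s - q) * (s - q') = 0 := by
        linear_combination (-s) * e2 + hqq - hss
      have hw1 : w.1 = z.1 ∨ w.1 = z.1⁻¹ := by
        rcases mul_eq_zero.1 h1 with h | h
        · exact Or.inl (Units.ext (sub_eq_zero.1 h))
        · exact Or.inr (Units.ext (sub_eq_zero.1 h))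
      have hw2 : w.2 = z.2 ∨ w.2 = z.2⁻¹ := by
        rcases mul_eq_zero.1 h2 with h | h
        · exact Or.inl (Units.ext (sub_eq_zero.1 h))
        · exact Or.inr (Units.ext (sub_eq_zero.1 h))
      rcases hw1 with h1' | h1' <;> rcases hw2 with h2' | h2'
      · exact Or.inl (Prod.ext h1' h2')
      · -- w.1 = z.1, w.2 = z.2⁻¹ : mixed case
        have hrp : r = p := by rw [hr, h1', hp]
        have hrp' : r' = p' := by rw [hr', h1', hp']
        have hsq : s = q' := by rw [hs, h2', hq']
        have hsq' : s' = q := by rw [hs', h2', inv_inv, hq]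
        have e3' : p * q + p' * q' = p * q' + p' * q := by
          rw [hrp, hrp', hsq, hsq'] at e3; linear_combination e3
        have hfac : (p - p') * (q - q') = 0 := by linear_combination e3'
        rcases mul_eq_zero.1 hfac with h | h
        · -- p = p', so z.1 = z.1⁻¹
          have : z.1 = z.1⁻¹ := Units.ext (sub_eq_zero.1 h)
          exact Or.inr (Prod.ext (h1'.trans this) h2')
        · -- q = q', so z.2 = z.2⁻¹
          have : z.2⁻¹ = z.2 := (Units.ext (sub_eq_zero.1 h)).symm
          exact Or.inl (Prod.ext h1' (h2'.trans this))
      · -- w.1 = z.1⁻¹, w.2 = z.2 : mixed case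
        have hrp : r = p' := by rw [hr, h1', hp']
        have hrp' : r' = p := by rw [hr', h1', inv_inv, hp]
        have hsq : s = q := by rw [hs, h2', hq]
        have hsq' : s' = q' := by rw [hs', h2', hq']
        have e3' : p * q + p' * q' = p' * q + p * q' := by
          rw [hrp, hrp', hsq, hsq'] at e3; linear_combination e3
        have hfac : (p - p') * (q - q') = 0 := by linear_combination e3'
        rcases mul_eq_zero.1 hfac with h | h
        · have : z.1 = z.1⁻¹ := Units.ext (sub_eq_zero.1 h)
          exact Or.inl (Prod.ext (h1'.trans this.symm) h2')
        · have : z.2 = z.2⁻¹ := Units.ext (sub_eq_zero.1 h)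
          exact Or.inr (Prod.ext h1' (h2'.trans this))
      · exact Or.inr (Prod.ext h1' h2')
    · intro h
      rcases h with h | h
      · rw [h]
      · rw [h, hf, hf]
        show _ = (((z.1⁻¹ : ℂˣ) : ℂ) + ((z.1⁻¹⁻¹ : ℂˣ) : ℂ),
          ((z.2⁻¹ : ℂˣ) : ℂ) + ((z.2⁻¹⁻¹ : ℂˣ) : ℂ),
          ((z.1⁻¹ : ℂˣ) : ℂ) * ((z.2⁻¹ : ℂˣ) : ℂ) +
            ((z.1⁻¹⁻¹ : ℂˣ) : ℂ) * ((z.2⁻¹⁻¹ : ℂˣ) : ℂ))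
        simp only [inv_inv]
        refine Prod.ext (by ring) (Prod.ext (by ring) (by ring))
end

section
/- For any parameters p_0, p_1, p_2, p_3 in C, the projective cubic surface obtained as the closure of {X_1 X_2 X_3 - X_1^2 - X_2^2 - X_3^2 + p_1 X_1 + p_2 X_2 + p_3 X_3 + p_0 + 4 = 0} in P^3 is smooth at every point of the plane at infinity {x_0 = 0}. -/
open MvPolynomial

lemma aux_zero (a b c : ℂ) (hs : a ^ 2 + b ^ 2 + c ^ 2 = 0)
    (h1 : b = 0 ∨ c = 0) (h2 : a = 0 ∨ c = 0) (h3 : a = 0 ∨ b = 0) :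
    a = 0 ∧ b = 0 ∧ c = 0 := by
  rcases h1 with h1 | h1 <;> rcases h2 with h2 | h2 <;> rcases h3 with h3 | h3 <;>
    simp_all [pow_eq_zero_iff]

/-- For any parameters `p₀,p₁,p₂,p₃ ∈ ℂ`, the projective cubic surface
`{F = 0} ⊂ ℙ³`, where `F` is the homogenization of
`X₁X₂X₃ - X₁² - X₂² - X₃² + p₁X₁ + p₂X₂ + p₃X₃ + p₀ + 4`,
is smooth at every point of the plane at infinity `{x₀ = 0}`: the gradient of `F`
does not vanish at any nonzero `x` with `x₀ = 0` lying on the surface. -/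
theorem smooth_at_infinity (p₀ p₁ p₂ p₃ : ℂ)
    (F : MvPolynomial (Fin 4) ℂ)
    (hF : F = X 1 * X 2 * X 3 - X 0 * (X 1 ^ 2 + X 2 ^ 2 + X 3 ^ 2)
      + X 0 ^ 2 * (C p₁ * X 1 + C p₂ * X 2 + C p₃ * X 3) + C (p₀ + 4) * X 0 ^ 3) :
    ∀ x : Fin 4 → ℂ, x ≠ 0 → x 0 = 0 → eval x F = 0 →
      ∃ i : Fin 4, eval x (pderiv i F) ≠ 0 := by
  intro x hx h0 _
  by_contra h
  push_neg at h
  have h0' := h 0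
  have h1 := h 1
  have h2 := h 2
  have h3 := h 3
  subst hF
  simp only [map_add, map_sub, map_mul, map_pow, pderiv_X, pderiv_mul, pderiv_pow, pderiv_C, eval_add, eval_sub, eval_mul, eval_pow,
    eval_X, eval_C, Pi.single_eq_of_ne, Pi.single_eq_same] at h0' h1 h2 h3
  norm_num [h0, Pi.single_apply, Fin.ext_iff, show ((3:Fin 4):ℕ)=3 from rfl, show ((2:Fin 4):ℕ)=2 from rfl, show ((1:Fin 4):ℕ)=1 from rfl, show ((0:Fin 4):ℕ)=0 from rfl] at h0' h1 h2 h3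
  -- h1 : x2*x3 = 0 etc, h0' : x1^2+x2^2+x3^2 = 0
  obtain ⟨ha, hb, hc⟩ := aux_zero (x 1) (x 2) (x 3) (by linear_combination -h0') h1 h2 h3
  apply hx
  funext i
  fin_cases i <;> simp only [Pi.zero_apply] <;> assumption
end

section
/- The homogeneous cubic polynomial F = x_1 x_2 x_3 - x_0(x_1^2 + x_2^2 + x_3^2) + x_0^2(p_1 x_1 + p_2 x_2 + p_3 x_3) + (p_0+4) x_0^3 is irreducible in C[x_0, x_1, x_2, x_3] for any complex parameters p_0, p_1, p_2, p_3. -/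
open MvPolynomial

private lemma finsupp_sum_eq_degree {σ : Type*} (m : σ →₀ ℕ) :
    (m.sum fun _ e => e) = m.degree := rfl

private lemma td_mul_eq {σ : Type*} {R : Type*} [CommRing R] [IsDomain R]
    {p q : MvPolynomial σ R} (hp : p ≠ 0) (hq : q ≠ 0) :
    (p * q).totalDegree = p.totalDegree + q.totalDegree := by
  classical
  apply le_antisymm (totalDegree_mul p q)
  set dp := p.totalDegree with hdp
  set dq := q.totalDegree with hdq
  set g := homogeneousComponent dp p with hg
  set h := homogeneousComponent dq q with hh
  have hcg : ∀ m : σ →₀ ℕ, m.degree = dp → coeff m g = coeff m p := by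
    intro m hm; rw [hg, coeff_homogeneousComponent, if_pos hm]
  have hch : ∀ m : σ →₀ ℕ, m.degree = dq → coeff m h = coeff m q := by
    intro m hm; rw [hh, coeff_homogeneousComponent, if_pos hm]
  have hgne : g ≠ 0 := by
    obtain ⟨m, hm, hd⟩ := Finset.exists_mem_eq_sup p.support (support_nonempty.mpr hp)
      (fun m => m.sum fun _ e => e)
    intro h0
    have : coeff m g = coeff m p := hcg m (by rw [← finsupp_sum_eq_degree, ← hd]; exact hdp.symm)
    rw [h0, coeff_zero] at this
    exact (mem_support_iff.mp hm) this.symm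
  have hhne : h ≠ 0 := by
    obtain ⟨m, hm, hd⟩ := Finset.exists_mem_eq_sup q.support (support_nonempty.mpr hq)
      (fun m => m.sum fun _ e => e)
    intro h0
    have : coeff m h = coeff m q := hch m (by rw [← finsupp_sum_eq_degree, ← hd]; exact hdq.symm)
    rw [h0, coeff_zero] at this
    exact (mem_support_iff.mp hm) this.symm
  have hghne : g * h ≠ 0 := mul_ne_zero hgne hhne
  have hgh : (g * h).IsHomogeneous (dp + dq) :=
    (homogeneousComponent_isHomogeneous dp p).mul (homogeneousComponent_isHomogeneous dq q)
  obtain ⟨m, hm⟩ := support_nonempty.mpr hghne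
  have hmd : m.degree = dp + dq := by
    by_contra hne
    exact mem_support_iff.mp hm (hgh.coeff_eq_zero hne)
  have hcoeff : coeff m (p * q) = coeff m (g * h) := by
    rw [coeff_mul, coeff_mul]
    apply Finset.sum_congr rfl
    rintro ⟨m₁, m₂⟩ hmem
    have hsum : m₁ + m₂ = m := (Finset.HasAntidiagonal.mem_antidiagonal.mp hmem)
    have hdsum : m₁.degree + m₂.degree = dp + dq := by
      rw [← hmd, ← hsum]
      simp [Finsupp.degree_eq_weight_one, map_add]
    simp only
    by_cases h1 : m₁.degree = dp
    · have h2 : m₂.degree = dq := by omega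
      rw [hcg m₁ h1, hch m₂ h2]
    · rcases Nat.lt_or_ge m₁.degree dp with hlt | hge
      · have h2 : dq < m₂.degree := by omega
        have : coeff m₂ q = 0 := coeff_eq_zero_of_totalDegree_lt (show q.totalDegree < m₂.degree from hdq ▸ h2)
        have hz : coeff m₂ h = 0 := by
          rw [hh, coeff_homogeneousComponent]
          split <;> simp_all
        rw [this, hz, mul_zero, mul_zero]
      · have h1' : dp < m₁.degree := lt_of_le_of_ne hge (Ne.symm h1)
        have : coeff m₁ p = 0 := coeff_eq_zero_of_totalDegree_lt (show p.totalDegree < m₁.degree from hdp ▸ h1')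
        have hz : coeff m₁ g = 0 := by
          rw [hg, coeff_homogeneousComponent]
          split <;> simp_all
        rw [this, hz, zero_mul, zero_mul]
  have : m ∈ (p * q).support := by
    rw [mem_support_iff, hcoeff]
    exact mem_support_iff.mp hm
  calc dp + dq = m.degree := hmd.symm
    _ = m.sum fun _ e => e := rfl
    _ ≤ (p * q).totalDegree := le_totalDegree this

private lemma eq_C_of_td_zero {σ : Type*} {R : Type*} [CommRing R]
    {p : MvPolynomial σ R} (hp : p.totalDegree = 0) : p = C (coeff 0 p) := by
  classical
  ext m
  by_cases hm : m = 0
  · subst hm; simp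
  · rw [coeff_C, if_neg (by exact fun h => hm h.symm)]
    by_contra hc
    have hms : m ∈ p.support := mem_support_iff.mpr hc
    have := (totalDegree_eq_zero_iff σ p).mp hp m hms
    exact hm (Finsupp.ext fun x => this x)

private lemma mono_classify (m : Fin 4 →₀ ℕ)
    (h : (m.sum fun _ e => e) ≤ 1) :
    m = 0 ∨ m = Finsupp.single 0 1 ∨ m = Finsupp.single 1 1 ∨
      m = Finsupp.single 2 1 ∨ m = Finsupp.single 3 1 := by
  have hs : (m.sum fun _ e => e) = m 0 + m 1 + m 2 + m 3 := by
    rw [Finsupp.sum_fintype _ _ (fun _ => rfl), Fin.sum_univ_four]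
  rw [hs] at h
  have key : (m 0 = 0 ∧ m 1 = 0 ∧ m 2 = 0 ∧ m 3 = 0) ∨
      (m 0 = 1 ∧ m 1 = 0 ∧ m 2 = 0 ∧ m 3 = 0) ∨
      (m 0 = 0 ∧ m 1 = 1 ∧ m 2 = 0 ∧ m 3 = 0) ∨
      (m 0 = 0 ∧ m 1 = 0 ∧ m 2 = 1 ∧ m 3 = 0) ∨
      (m 0 = 0 ∧ m 1 = 0 ∧ m 2 = 0 ∧ m 3 = 1) := by omega
  have hext : ∀ (v : Fin 4 →₀ ℕ), m 0 = v 0 → m 1 = v 1 → m 2 = v 2 → m 3 = v 3 → m = v := by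
    intro v a0 a1 a2 a3
    ext j
    fin_cases j <;> assumption
  rcases key with ⟨a,b,c,d⟩|⟨a,b,c,d⟩|⟨a,b,c,d⟩|⟨a,b,c,d⟩|⟨a,b,c,d⟩
  · exact Or.inl (hext 0 (by simpa) (by simpa) (by simpa) (by simpa))
  · exact Or.inr (Or.inl (hext _ (by simp [Finsupp.single_apply, a])
      (by simp [Finsupp.single_apply, b]) (by simp [Finsupp.single_apply, c])
      (by simp [Finsupp.single_apply, d])))
  · exact Or.inr (Or.inr (Or.inl (hext _ (by simp [Finsupp.single_apply, a])
      (by simp [Finsupp.single_apply, b]) (by simp [Finsupp.single_apply, c])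
      (by simp [Finsupp.single_apply, d]))))
  · exact Or.inr (Or.inr (Or.inr (Or.inl (hext _ (by simp [Finsupp.single_apply, a])
      (by simp [Finsupp.single_apply, b]) (by simp [Finsupp.single_apply, c])
      (by simp [Finsupp.single_apply, d])))))
  · exact Or.inr (Or.inr (Or.inr (Or.inr (hext _ (by simp [Finsupp.single_apply, a])
      (by simp [Finsupp.single_apply, b]) (by simp [Finsupp.single_apply, c])
      (by simp [Finsupp.single_apply, d])))))


private lemma decomp_deg_le_one {G : MvPolynomial (Fin 4) ℂ} (hG : G.totalDegree ≤ 1) :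
    G = C (coeff 0 G) + C (coeff (Finsupp.single 0 1) G) * X 0
      + C (coeff (Finsupp.single 1 1) G) * X 1
      + C (coeff (Finsupp.single 2 1) G) * X 2
      + C (coeff (Finsupp.single 3 1) G) * X 3 := by
  classical
  have hsingle : ∀ i : Fin 4, ((Finsupp.single i 1 : Fin 4 →₀ ℕ).sum fun _ e => e) = 1 := by
    intro i; rw [Finsupp.sum_single_index]; rfl
  ext m
  simp only [coeff_add, coeff_C, coeff_C_mul, coeff_X']
  by_cases hm : (m.sum fun _ e => e) ≤ 1
  · rcases mono_classify m hm with rfl | rfl | rfl | rfl | rfl <;>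
      simp [Finsupp.single_eq_single_iff, Finsupp.single_eq_zero, (Finsupp.single_eq_zero (a := (0:Fin 4)) (b := (1:ℕ))), eq_comm (a := (0 : Fin 4 →₀ ℕ))]
  · have h0 : ¬ ((0 : Fin 4 →₀ ℕ) = m) := fun h => hm (by rw [← h]; simp)
    have h1 : ∀ i : Fin 4, ¬ ((Finsupp.single i 1 : Fin 4 →₀ ℕ) = m) := by
      intro i h; exact hm (by rw [← h, hsingle i])
    have hz : coeff m G = 0 := by
      apply coeff_eq_zero_of_totalDegree_lt
      have h2 : 1 < m.sum fun _ e => e := by omega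
      exact lt_of_le_of_lt hG h2
    rw [hz, if_neg h0, if_neg (h1 0), if_neg (h1 1), if_neg (h1 2), if_neg (h1 3)]
    ring


private lemma no_linear_factor (p₀ p₁ p₂ p₃ : ℂ) (G H : MvPolynomial (Fin 4) ℂ)
    (hGH : X 1 * X 2 * X 3 - X 0 * (X 1 ^ 2 + X 2 ^ 2 + X 3 ^ 2)
      + X 0 ^ 2 * (C p₁ * X 1 + C p₂ * X 2 + C p₃ * X 3) + C (p₀ + 4) * X 0 ^ 3 = G * H)
    (hG1 : G.totalDegree = 1) : False := by
  classical
  set a := coeff 0 G with ha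
  set b := coeff (Finsupp.single 0 1) G with hb
  set c := coeff (Finsupp.single 1 1) G with hc'
  set d := coeff (Finsupp.single 2 1) G with hd'
  set e := coeff (Finsupp.single 3 1) G with he'
  have hGdecomp : G = C a + C b * X 0 + C c * X 1 + C d * X 2 + C e * X 3 :=
    decomp_deg_le_one hG1.le
  have key : ∀ x0 x1 x2 x3 : ℂ,
      a + b * x0 + c * x1 + d * x2 + e * x3 = 0 →
      x1 * x2 * x3 - x0 * (x1 ^ 2 + x2 ^ 2 + x3 ^ 2)
        + x0 ^ 2 * (p₁ * x1 + p₂ * x2 + p₃ * x3) + (p₀ + 4) * x0 ^ 3 = 0 := by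
    intro x0 x1 x2 x3 hx
    set x : Fin 4 → ℂ := fun i => if i = 0 then x0 else if i = 1 then x1 else
      if i = 2 then x2 else x3 with hxdef
    have e0 : x 0 = x0 := rfl
    have e1 : x 1 = x1 := rfl
    have e2 : x 2 = x2 := rfl
    have e3 : x 3 = x3 := rfl
    have hG0 : eval x G = 0 := by
      rw [hGdecomp]
      simp only [map_add, map_mul, eval_C, eval_X, e0, e1, e2, e3]
      linear_combination hx
    have h := congrArg (eval x) hGH
    simp only [map_add, map_sub, map_mul, map_pow, eval_C, eval_X, hG0, zero_mul,
      e0, e1, e2, e3] at h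
    linear_combination h
  by_cases hc : c ≠ 0
  · obtain ⟨α, hca⟩ : ∃ α, c * α = a := ⟨a / c, by field_simp⟩
    have k : ∀ t u v : ℂ, _ := fun t u v =>
      key (c*t) (-(α + b*t + d*u + e*v)) (c*u) (c*v) (by linear_combination -hca)
    have h1 := k 0 1 1
    have h2 := k 0 0 1
    have h3 := k 0 (-1) 1
    have hdc : d * c ^ 2 = 0 := by
      linear_combination (-1/2 : ℂ) * h1 + h2 - (1/2 : ℂ) * h3
    have hd : d = 0 := by
      rcases mul_eq_zero.mp hdc with h | h
      · exact h
      · exact absurd ((pow_eq_zero_iff two_ne_zero).mp h) hc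
    have h4 := k 1 1 0
    have h5 := k 1 0 0
    have h6 := k 1 (-1) 0
    have hc3 : c ^ 3 = 0 := by
      linear_combination (-1/2 : ℂ) * h4 + h5 - (1/2 : ℂ) * h6 - d * c * hd
    exact hc ((pow_eq_zero_iff three_ne_zero).mp hc3)
  push_neg at hc
  by_cases hd : d ≠ 0
  · obtain ⟨α, hda⟩ : ∃ α, d * α = a := ⟨a / d, by field_simp⟩
    have k : ∀ t u v : ℂ, _ := fun t u v =>
      key (d*t) u (-(α + b*t + e*v)) (d*v) (by linear_combination -hda + u * hc)
    have h1 := k 1 1 0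
    have h2 := k 1 0 0
    have h3 := k 1 (-1) 0
    have : d = 0 := by
      linear_combination (-1/2 : ℂ) * h1 + h2 - (1/2 : ℂ) * h3
    exact hd this
  push_neg at hd
  by_cases he : e ≠ 0
  · obtain ⟨α, hea⟩ : ∃ α, e * α = a := ⟨a / e, by field_simp⟩
    have k : ∀ t u v : ℂ, _ := fun t u v =>
      key (e*t) u v (-(α + b*t)) (by linear_combination -hea + u * hc + v * hd)
    have h1 := k 1 1 0
    have h2 := k 1 0 0
    have h3 := k 1 (-1) 0
    have : e = 0 := by
      linear_combination (-1/2 : ℂ) * h1 + h2 - (1/2 : ℂ) * h3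
    exact he this
  push_neg at he
  by_cases hbz : b ≠ 0
  · obtain ⟨β, hba⟩ : ∃ β, b * β = a := ⟨a / b, by field_simp⟩
    have k : ∀ u v w : ℂ, _ := fun u v w =>
      key (-β) u v w (by linear_combination -hba + u * hc + v * hd + w * he)
    have : (1 : ℂ) = 0 := by
      linear_combination (1/8 : ℂ) * (k 1 1 1 - k 1 1 (-1) - k 1 (-1) 1 - k (-1) 1 1
        + k 1 (-1) (-1) + k (-1) 1 (-1) + k (-1) (-1) 1 - k (-1) (-1) (-1))
    exact one_ne_zero this
  push_neg at hbz
  rw [hbz, hc, hd, he] at hGdecomp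
  simp only [map_zero, zero_mul, add_zero] at hGdecomp
  rw [hGdecomp, totalDegree_C] at hG1
  exact absurd hG1 zero_ne_one

/-- The homogeneous cubic
`F = x₁x₂x₃ - x₀(x₁² + x₂² + x₃²) + x₀²(p₁x₁ + p₂x₂ + p₃x₃) + (p₀+4)x₀³`
is irreducible in `ℂ[x₀,x₁,x₂,x₃]` for any complex parameters `p₀,p₁,p₂,p₃`. -/
theorem homogeneous_cubic_irreducible (p₀ p₁ p₂ p₃ : ℂ)
    (F : MvPolynomial (Fin 4) ℂ)
    (hF : F = X 1 * X 2 * X 3 - X 0 * (X 1 ^ 2 + X 2 ^ 2 + X 3 ^ 2)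
      + X 0 ^ 2 * (C p₁ * X 1 + C p₂ * X 2 + C p₃ * X 3) + C (p₀ + 4) * X 0 ^ 3) :
    Irreducible F := by
  have hFne : F ≠ 0 := by
    intro h0
    set x : Fin 4 → ℂ := fun i => if i = 0 then 0 else 1 with hx
    have e0 : x 0 = 0 := rfl
    have e1 : x 1 = 1 := rfl
    have e2 : x 2 = 1 := rfl
    have e3 : x 3 = 1 := rfl
    have h := congrArg (eval x) (h0 ▸ hF)
    simp only [map_add, map_sub, map_mul, map_pow, eval_C, eval_X, map_zero, e0, e1, e2, e3] at h
    norm_num at h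
  have hhom : F.IsHomogeneous 3 := by
    rw [hF]
    exact ((((isHomogeneous_X ℂ 1).mul (isHomogeneous_X ℂ 2)).mul (isHomogeneous_X ℂ 3)).sub
      ((isHomogeneous_X ℂ 0).mul (((isHomogeneous_X_pow 1 2).add
        (isHomogeneous_X_pow 2 2)).add (isHomogeneous_X_pow 3 2)))).add
      (((isHomogeneous_X_pow 0 2).mul (((isHomogeneous_C_mul_X p₁ 1).add
        (isHomogeneous_C_mul_X p₂ 2)).add (isHomogeneous_C_mul_X p₃ 3)))) |>.add
      ((isHomogeneous_C (Fin 4) (p₀ + 4)).mul (isHomogeneous_X_pow 0 3))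
  have hdF : F.totalDegree = 3 := hhom.totalDegree hFne
  constructor
  · intro hu
    obtain ⟨V, hV⟩ := hu.exists_right_inv
    have hVne : V ≠ 0 := by rintro rfl; simp at hV
    have := td_mul_eq hFne hVne
    rw [hV, totalDegree_one, hdF] at this
    omega
  · intro G H hGH
    have hGne : G ≠ 0 := by rintro rfl; rw [zero_mul] at hGH; exact hFne hGH
    have hHne : H ≠ 0 := by rintro rfl; rw [mul_zero] at hGH; exact hFne hGH
    have hsum : G.totalDegree + H.totalDegree = 3 := by
      rw [← td_mul_eq hGne hHne, ← hGH, hdF]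
    by_cases hG0 : G.totalDegree = 0
    · left
      rw [eq_C_of_td_zero hG0]
      refine (isUnit_iff_ne_zero.mpr fun h => hGne ?_).map C
      rw [eq_C_of_td_zero hG0, h, map_zero]
    by_cases hH0 : H.totalDegree = 0
    · right
      rw [eq_C_of_td_zero hH0]
      refine (isUnit_iff_ne_zero.mpr fun h => hHne ?_).map C
      rw [eq_C_of_td_zero hH0, h, map_zero]
    exfalso
    rcases eq_or_ne G.totalDegree 1 with hG1 | hG1
    · exact no_linear_factor p₀ p₁ p₂ p₃ G H (by rw [← hF, hGH]) hG1
    · have hH1 : H.totalDegree = 1 := by omega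
      exact no_linear_factor p₀ p₁ p₂ p₃ H G (by rw [← hF, hGH, mul_comm]) hH1
end

section
/- Let C' ⊂ C^3 be an irreducible affine cubic surface whose projective closure meets the plane at infinity in the triangle {x_0 = x_1 x_2 x_3 = 0}, and suppose all points at infinity of the closure are smooth points. Then after translating and rescaling the coordinates X_1, X_2, X_3, the equation of C' can be brought to the form X_1 X_2 X_3 = X_1^2 + X_2^2 + X_3^2 + b_1 X_1 + b_2 X_2 + b_3 X_3 + c for some constants b_1, b_2, b_3, c in C. -/
open MvPolynomial

private lemma exists_sqrt (z : ℂ) : ∃ w : ℂ, w ^ 2 = z := by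
  have : ∃ w : ℂ, (Polynomial.X ^ 2 - Polynomial.C z).IsRoot w := by
    apply Complex.exists_root
    have : (Polynomial.X ^ 2 - Polynomial.C z).degree = 2 := by
      rw [Polynomial.degree_X_pow_sub_C] <;> norm_num
    rw [this]; norm_num
  obtain ⟨w, hw⟩ := this
  exact ⟨w, by simpa [Polynomial.IsRoot, sub_eq_zero] using hw⟩

set_option maxHeartbeats 4000000 in
/-- Let `C' ⊂ ℂ³` be an irreducible affine cubic surface whose projective
closure meets the plane at infinity in the triangle `{x₀ = x₁x₂x₃ = 0}` — so its
equation has the form `X₁X₂X₃ = Σ aᵢⱼ XᵢXⱼ + Σ bₖ Xₖ + c` — and suppose all points at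
infinity of the closure are smooth.  Then after translating and rescaling the
coordinates, the equation can be brought to the form
`X₁X₂X₃ = X₁² + X₂² + X₃² + b₁X₁ + b₂X₂ + b₃X₃ + c`. -/
theorem cubic_with_triangle_normal_form
    (a : Fin 3 → Fin 3 → ℂ) (b : Fin 3 → ℂ) (c : ℂ)
    (R' : MvPolynomial (Fin 3) ℂ)
    (hR' : R' = X 0 * X 1 * X 2 -
      ((∑ i : Fin 3, ∑ j : Fin 3, C (a i j) * X i * X j) +
        (∑ k : Fin 3, C (b k) * X k) + C c))
    (hirr : Irreducible R')
    (F' : MvPolynomial (Fin 4) ℂ)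
    -- `F'` is the homogenization of `R'` with respect to `x₀`
    (hF' : F' = X 1 * X 2 * X 3 -
      (X 0 * (∑ i : Fin 3, ∑ j : Fin 3, C (a i j) * X i.succ * X j.succ) +
        X 0 ^ 2 * (∑ k : Fin 3, C (b k) * X k.succ) + C c * X 0 ^ 3))
    -- all points at infinity of the projective closure are smooth
    (hsmooth : ∀ x : Fin 4 → ℂ, x ≠ 0 → x 0 = 0 → eval x F' = 0 →
      ∃ i : Fin 4, eval x (pderiv i F') ≠ 0) :
    ∃ (lam t b' : Fin 3 → ℂ) (c' μ : ℂ), (∀ i, lam i ≠ 0) ∧ μ ≠ 0 ∧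
      aeval (fun i : Fin 3 => C (lam i) * X i + C (t i)) R' =
        C μ * (X 0 * X 1 * X 2 -
          (X 0 ^ 2 + X 1 ^ 2 + X 2 ^ 2 +
            (∑ k : Fin 3, C (b' k) * X k) + C c')) := by
  -- expand the sums in F'
  have h1 : ((0:Fin 3).succ = (1:Fin 4)) := by decide
  have h2 : ((1:Fin 3).succ = (2:Fin 4)) := by decide
  have h3 : ((2:Fin 3).succ = (3:Fin 4)) := by decide
  simp only [Fin.sum_univ_three, h1, h2, h3] at hF'
  -- the diagonal coefficients are nonzero
  have hd0 : a 0 0 ≠ 0 := by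
    intro h0
    obtain ⟨i, hi⟩ := hsmooth ![0,1,0,0] (by
      intro h; have := congrFun h 1; simp at this) (by simp) (by rw [hF']; simp)
    rw [hF'] at hi
    fin_cases i <;> simp [h0] at hi
  have hd1 : a 1 1 ≠ 0 := by
    intro h0
    obtain ⟨i, hi⟩ := hsmooth ![0,0,1,0] (by
      intro h; have := congrFun h 2; simp at this) (by simp) (by rw [hF']; simp)
    rw [hF'] at hi
    fin_cases i <;> simp [h0] at hi
  have hd2 : a 2 2 ≠ 0 := by
    intro h0
    obtain ⟨i, hi⟩ := hsmooth ![0,0,0,1] (by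
      intro h; have := congrFun h 3; simp at this) (by simp) (by rw [hF']; simp)
    rw [hF'] at hi
    fin_cases i <;> simp [h0] at hi
  -- choose square roots of the diagonal coefficients
  obtain ⟨s0, hs0⟩ := exists_sqrt (a 0 0)
  obtain ⟨s1, hs1⟩ := exists_sqrt (a 1 1)
  obtain ⟨s2, hs2⟩ := exists_sqrt (a 2 2)
  set s : Fin 3 → ℂ := ![s0, s1, s2] with hsdef
  have hs : ∀ i, s i ^ 2 = a i i := by
    intro i; fin_cases i <;> simpa [hsdef] using (by assumption)
  have hsne : ∀ i, s i ≠ 0 := by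
    intro i hz
    have := hs i
    rw [hz] at this
    fin_cases i <;> simp_all
  clear hs0 hs1 hs2 hd0 hd1 hd2 hsmooth hF' hirr
  -- the change of coordinates
  set lam : Fin 3 → ℂ := ![s 1 * s 2, s 0 * s 2, s 0 * s 1] with hlam
  set t : Fin 3 → ℂ := ![a 1 2 + a 2 1, a 0 2 + a 2 0, a 0 1 + a 1 0] with ht
  set μ : ℂ := (s 0 * s 1 * s 2) ^ 2 with hμ
  have hμne : μ ≠ 0 := by
    simp only [hμ]
    exact pow_ne_zero _ (mul_ne_zero (mul_ne_zero (hsne 0) (hsne 1)) (hsne 2))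
  set Q : Fin 3 → ℂ := fun i => ∑ m : Fin 3, (a i m + a m i) * t m with hQ
  set b' : Fin 3 → ℂ := ![
    (lam 0 * Q 0 + b 0 * lam 0 - lam 0 * (t 1 * t 2)) / μ,
    (lam 1 * Q 1 + b 1 * lam 1 - lam 1 * (t 0 * t 2)) / μ,
    (lam 2 * Q 2 + b 2 * lam 2 - lam 2 * (t 0 * t 1)) / μ] with hb'
  set c' : ℂ := ((∑ i : Fin 3, ∑ j : Fin 3, a i j * t i * t j) +
      (∑ k : Fin 3, b k * t k) + c - t 0 * t 1 * t 2) / μ with hc'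
  refine ⟨lam, t, b', c', μ, ?_, hμne, ?_⟩
  · intro i
    fin_cases i <;>
      simp [hlam, mul_ne_zero, hsne 0, hsne 1, hsne 2]
  · apply MvPolynomial.funext
    intro x
    rw [hR']
    simp only [map_sub, map_add, map_mul, map_pow, map_sum, aeval_X, aeval_C,
      algebraMap_eq, eval_C, eval_X, eval_mul, eval_add, eval_sub, eval_pow,
      Fin.sum_univ_three]
    have g0 := hs 0; have g1 := hs 1; have g2 := hs 2
    simp only [hb', hQ, hc', hlam, ht, Fin.sum_univ_three,
      Matrix.cons_val_zero, Matrix.cons_val_one, Matrix.head_cons,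
      Matrix.cons_val_two, Matrix.tail_cons] at *
    rw [← g0, ← g1, ← g2]
    field_simp
    ring
end

section
/- The subgroup K of PGL(2, Z) consisting of classes of matrices in GL(2, Z) congruent to the identity modulo 2 is freely generated by the three involutions g_1 = [[1,0],[0,-1]], g_2 = [[1,2],[0,-1]], g_3 = [[1,0],[2,-1]]; that is, K is isomorphic to the free product Z/2 * Z/2 * Z/2 with these generators. -/
open Matrix

/-- `GL(2, ℤ)`. -/
abbrev GLZ := GL (Fin 2) ℤ

/-- The subgroup `{±I}` of `GL(2, ℤ)`. -/
def pmOne : Subgroup GLZ := Subgroup.zpowers (-1 : GLZ)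

instance pmOne_normal : pmOne.Normal := by
  constructor
  intro x hx g
  have hx' : x ∈ Subgroup.center GLZ := by
    have h1 : (-1 : GLZ) ∈ Subgroup.center GLZ := by
      rw [Subgroup.mem_center_iff]; intro g; rw [mul_neg_one, neg_one_mul]
    rcases Subgroup.mem_zpowers_iff.mp hx with ⟨k, hk⟩
    exact hk ▸ Subgroup.zpow_mem _ h1 k
  have h2 : g * x * g⁻¹ = x := by
    rw [(Subgroup.mem_center_iff.mp hx') g]; group
  exact h2.symm ▸ hx

/-- `PGL(2, ℤ) = GL(2, ℤ)/{±I}`. -/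
def PGLZ := GLZ ⧸ pmOne

noncomputable instance : Group PGLZ := by unfold PGLZ; infer_instance

/-- Reduction mod 2, `GL(2, ℤ) → GL(2, ℤ/2)`. -/
noncomputable def mod2Hom : GLZ →* GL (Fin 2) (ZMod 2) :=
  Units.map (RingHom.toMonoidHom (RingHom.mapMatrix (Int.castRingHom (ZMod 2))))

lemma mod2Hom_neg_one : mod2Hom (-1) = 1 := by
  apply Units.ext
  show (Matrix.map (-1 : Matrix (Fin 2) (Fin 2) ℤ) (Int.cast : ℤ → ZMod 2)) = 1
  ext i j
  fin_cases i <;> fin_cases j <;> simp [Matrix.one_apply] <;> decide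

/-- The mod-2 reduction `PGL(2, ℤ) → PGL(2, ℤ/2) = GL(2, ℤ/2)`. -/
noncomputable def mod2PGL : PGLZ →* GL (Fin 2) (ZMod 2) :=
  QuotientGroup.lift pmOne mod2Hom (by
    intro x hx
    rcases Subgroup.mem_zpowers_iff.mp hx with ⟨k, hk⟩
    rw [← hk, MonoidHom.mem_ker, map_zpow, mod2Hom_neg_one, _root_.one_zpow])

/-- `K = ker(PGL(2,ℤ) → PGL(2,ℤ/2))`: the classes of matrices congruent to the
identity mod 2. -/
noncomputable def Kcongr : Subgroup PGLZ := mod2PGL.ker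

/-- An involutive integer matrix gives an element of `GL(2, ℤ)`. -/
def mkInv (A : Matrix (Fin 2) (Fin 2) ℤ) (h : A * A = 1) : GLZ := ⟨A, A, h, h⟩

/-- The three involutions `g₁ = [[1,0],[0,-1]]`, `g₂ = [[1,2],[0,-1]]`,
`g₃ = [[1,0],[2,-1]]` as elements of `PGL(2, ℤ)`. -/
noncomputable def genK : Fin 3 → PGLZ :=
  ![QuotientGroup.mk (mkInv !![1, 0; 0, -1] (by decide)),
    QuotientGroup.mk (mkInv !![1, 2; 0, -1] (by decide)),
    QuotientGroup.mk (mkInv !![1, 0; 2, -1] (by decide))]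
noncomputable def mkP : GLZ → PGLZ := QuotientGroup.mk

def gm : Fin 3 → Matrix (Fin 2) (Fin 2) ℤ :=
  ![!![1, 0; 0, -1], !![1, 2; 0, -1], !![1, 0; 2, -1]]

lemma gm_sq (i : Fin 3) : gm i * gm i = 1 := by fin_cases i <;> decide

def glz (i : Fin 3) : GLZ := mkInv (gm i) (gm_sq i)

lemma genK_eq (i : Fin 3) : genK i = mkP (glz i) := by
  fin_cases i <;> rfl

lemma mkP_mul (a b : GLZ) :
    mkP (a * b) = mkP a * mkP b := rfl

lemma mkP_one : mkP (1 : GLZ) = 1 := rfl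
lemma mkP_neg (a : GLZ) : mkP (-a) = mkP a := by
  apply (QuotientGroup.eq (s := pmOne)).mpr
  have : (-a)⁻¹ * a = -1 := by
    rw [← neg_one_mul a, _root_.mul_inv_rev, mul_assoc]
    simp
  rw [this]
  exact Subgroup.mem_zpowers _
lemma neg_one_sq_GLZ : (-1 : GLZ) ^ (2:ℤ) = 1 := by
  rw [zpow_two]; simp

lemma pmOne_cases {x : GLZ} (h : x ∈ pmOne) : x = 1 ∨ x = -1 := by
  rcases Subgroup.mem_zpowers_iff.mp h with ⟨k, hk⟩
  rcases Int.even_or_odd k with ⟨m, hm⟩ | ⟨m, hm⟩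
  · left
    rw [← hk, hm, ← two_mul, _root_.zpow_mul, neg_one_sq_GLZ, _root_.one_zpow]
  · right
    rw [← hk, hm, _root_.zpow_add, _root_.zpow_mul, neg_one_sq_GLZ, _root_.one_zpow, one_mul, zpow_one]
lemma mod2PGL_mk (a : GLZ) : mod2PGL (QuotientGroup.mk a) = mod2Hom a := rfl

lemma genK_mem (i : Fin 3) : genK i ∈ Kcongr := by
  rw [genK_eq, Kcongr, MonoidHom.mem_ker]
  have hr : mod2PGL (mkP (glz i)) = mod2Hom (glz i) := rfl
  rw [hr]
  apply Units.ext
  show (Matrix.map (glz i).val (Int.cast : ℤ → ZMod 2)) = 1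
  fin_cases i <;> (ext a b; fin_cases a <;> fin_cases b <;>
    simp [glz, gm, mkInv, Matrix.one_apply] <;> decide)

lemma glz_sq (i : Fin 3) : glz i * glz i = 1 := by
  apply Units.ext
  show gm i * gm i = 1
  exact gm_sq i

lemma genK_sq (i : Fin 3) : genK i * genK i = 1 := by
  rw [genK_eq, ← mkP_mul, glz_sq, mkP_one]

-- parity extraction
lemma mem_Kcongr_entries {A : GLZ} (h : mkP A ∈ Kcongr) :
    A.val 0 0 % 2 = 1 ∧ A.val 0 1 % 2 = 0 ∧ A.val 1 0 % 2 = 0 ∧ A.val 1 1 % 2 = 1 := by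
  rw [Kcongr, MonoidHom.mem_ker] at h
  have h' : mod2Hom A = 1 := h
  have h2 : (Matrix.map A.val (Int.cast : ℤ → ZMod 2)) = 1 := congrArg Units.val h'
  have key : ∀ a b : Fin 2, ((A.val a b : ZMod 2)) = (1 : Matrix (Fin 2) (Fin 2) (ZMod 2)) a b := by
    intro a b; rw [← h2]; rfl
  have odd1 : ∀ n : ℤ, ((n : ZMod 2)) = 1 → n % 2 = 1 := by
    intro n hn
    have : ((n - 1 : ℤ) : ZMod 2) = 0 := by push_cast; rw [hn]; ring
    have := (ZMod.intCast_zmod_eq_zero_iff_dvd _ 2).mp this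
    omega
  have even0 : ∀ n : ℤ, ((n : ZMod 2)) = 0 → n % 2 = 0 := by
    intro n hn
    have := (ZMod.intCast_zmod_eq_zero_iff_dvd _ 2).mp hn
    omega
  refine ⟨odd1 _ ?_, even0 _ ?_, even0 _ ?_, odd1 _ ?_⟩
  · have := key 0 0; rwa [Matrix.one_apply_eq] at this
  · have := key 0 1; rwa [Matrix.one_apply_ne (by decide)] at this
  · have := key 1 0; rwa [Matrix.one_apply_ne (by decide)] at this
  · have := key 1 1; rwa [Matrix.one_apply_eq] at this
def Xset : Fin 3 → (Fin 2 → ℤ) → Prop :=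
  ![fun v => (v 0 * v 1 < 0 ∧ v 0 ^ 2 < v 1 ^ 2) ∨ (0 < v 0 * v 1 ∧ v 1 ^ 2 < v 0 ^ 2),
    fun v => v 0 * v 1 < 0 ∧ v 1 ^ 2 < v 0 ^ 2,
    fun v => 0 < v 0 * v 1 ∧ v 0 ^ 2 < v 1 ^ 2]

lemma Xset_disj {i j : Fin 3} (h : i ≠ j) {v : Fin 2 → ℤ} (hi : Xset i v) (hj : Xset j v) :
    False := by
  fin_cases i <;> fin_cases j <;> simp only [Xset, Matrix.cons_val_zero, Matrix.cons_val_one,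
      Matrix.head_cons, Matrix.cons_val_two, Matrix.tail_cons, Fin.isValue] at hi hj <;>
  first
    | exact h rfl
    | (rcases hi with ⟨h1, h2⟩ | ⟨h1, h2⟩ <;> obtain ⟨h3, h4⟩ := hj <;> linarith)
    | (rcases hj with ⟨h3, h4⟩ | ⟨h3, h4⟩ <;> obtain ⟨h1, h2⟩ := hi <;> linarith)
    | (obtain ⟨h1, h2⟩ := hi; obtain ⟨h3, h4⟩ := hj; linarith)

lemma Xset_neg {i : Fin 3} {v : Fin 2 → ℤ} (h : Xset i v) : Xset i (-v) := by
  fin_cases i <;> simp_all [Xset] <;> constructor <;> intros <;> nlinarith [h.1, h.2]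

lemma gm_mulVec (i : Fin 3) (v : Fin 2 → ℤ) :
    (gm i).mulVec v = ![![v 0 - 0, -v 1], ![v 0 + 2 * v 1, -v 1], ![v 0, 2 * v 0 - v 1]] i := by
  fin_cases i <;> (funext a; fin_cases a <;>
    simp [gm, Matrix.mulVec, dotProduct, Fin.sum_univ_two] <;> ring)

lemma pingpong {i j : Fin 3} (h : i ≠ j) {v : Fin 2 → ℤ} (hv : Xset j v) :
    Xset i ((gm i).mulVec v) := by
  rw [gm_mulVec]
  fin_cases i <;> fin_cases j <;> simp_all [Xset] <;>
  first
  | (rcases hv with ⟨h1, h2⟩ | ⟨h1, h2⟩ <;>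
      [skip; skip] <;> constructor <;> nlinarith [sq_nonneg (v 0), sq_nonneg (v 1), sq_nonneg (v 0 + v 1), sq_nonneg (v 0 - v 1)])
  | (obtain ⟨h1, h2⟩ := hv <;> first
      | (left; constructor <;> nlinarith [sq_nonneg (v 0), sq_nonneg (v 1), sq_nonneg (v 0 + v 1), sq_nonneg (v 0 - v 1)])
      | (right; constructor <;> nlinarith [sq_nonneg (v 0), sq_nonneg (v 1), sq_nonneg (v 0 + v 1), sq_nonneg (v 0 - v 1)])
      | (constructor <;> nlinarith [sq_nonneg (v 0), sq_nonneg (v 1), sq_nonneg (v 0 + v 1), sq_nonneg (v 0 - v 1)]))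
lemma free_aux : ∀ (l : List (Fin 3)) (i j : Fin 3), (i :: l).Chain' (· ≠ ·) →
    j ≠ (i :: l).getLast (by simp) → ∀ v : Fin 2 → ℤ, Xset j v →
    Xset i ((((i :: l).map gm).prod).mulVec v) := by
  intro l
  induction l with
  | nil =>
    intro i j _ hj v hv
    simp only [List.getLast] at hj
    simp only [List.map, List.prod_cons, List.prod_nil, mul_one]
    exact pingpong (fun he : i = j => hj he.symm) hv
  | cons b l ih =>
    intro i j hc hj v hv
    have hib : i ≠ b := (List.isChain_cons_cons.mp hc).1
    have hc' : (b :: l).Chain' (· ≠ ·) := (List.isChain_cons_cons.mp hc).2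
    have hj' : j ≠ (b :: l).getLast (by simp) := by
      have : (i :: b :: l).getLast (by simp) = (b :: l).getLast (by simp) := by
        simp [List.getLast_cons]
      rwa [this] at hj
    have step := ih b j hc' hj' v hv
    have : (((i :: b :: l).map gm).prod) = gm i * (((b :: l).map gm).prod) := by
      simp [List.map, List.prod_cons]
    rw [this, ← Matrix.mulVec_mulVec]
    exact pingpong hib step
lemma exists_third (a b : Fin 3) : ∃ c, c ≠ a ∧ c ≠ b := by
  fin_cases a <;> fin_cases b <;> decide

def wit : Fin 3 → Fin 2 → ℤ := ![![2, 1], ![-2, 1], ![1, 2]]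

lemma wit_mem : ∀ j : Fin 3, Xset j (wit j) := by
  intro j; fin_cases j <;> norm_num [Xset, wit]

lemma prod_genK_eq (L : List (Fin 3)) :
    (L.map genK).prod = mkP ((L.map glz).prod) := by
  induction L with
  | nil => simp only [List.map_nil, List.prod_nil]; rfl
  | cons a L ih => simp only [List.map_cons, List.prod_cons, ih, genK_eq, mkP_mul]

lemma prod_glz_val (L : List (Fin 3)) :
    (((L.map glz).prod : GLZ) : Matrix (Fin 2) (Fin 2) ℤ) = (L.map gm).prod := by
  induction L with
  | nil => simp
  | cons a L ih => simp only [List.map_cons, List.prod_cons, Units.val_mul, ih]; rfl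

lemma freeness : ∀ l : List (Fin 3), l.Chain' (· ≠ ·) → (l.map genK).prod = 1 → l = [] := by
  intro l hc hp
  cases l with
  | nil => rfl
  | cons i l' =>
    exfalso
    set U : GLZ := (((i :: l').map glz).prod) with hU
    have hmem : U ∈ pmOne := by
      have h1 : (QuotientGroup.mk U : GLZ ⧸ pmOne) = 1 := by
        rw [prod_genK_eq] at hp; exact hp
      exact (QuotientGroup.eq_one_iff U).mp h1
    obtain ⟨j, hji, hjl⟩ := exists_third i ((i :: l').getLast (by simp))
    have hX := free_aux l' i j hc hjl (wit j) (wit_mem j)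
    have hMval : (U : Matrix (Fin 2) (Fin 2) ℤ) = ((i :: l').map gm).prod := prod_glz_val _
    rcases pmOne_cases hmem with h1 | h1
    · have : ((i :: l').map gm).prod = 1 := by rw [← hMval, h1]; rfl
      rw [this, Matrix.one_mulVec] at hX
      exact Xset_disj hji.symm hX (wit_mem j)
    · have : ((i :: l').map gm).prod = -1 := by rw [← hMval, h1]; rfl
      rw [this, Matrix.neg_mulVec, Matrix.one_mulVec] at hX
      exact Xset_disj hji.symm hX (Xset_neg (wit_mem j))
noncomputable def KK : Subgroup PGLZ := Subgroup.closure {genK 0, genK 1, genK 2}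

lemma genK_mem_KK (i : Fin 3) : genK i ∈ KK := by
  apply Subgroup.subset_closure
  fin_cases i <;> simp

lemma step_mem {A A' : GLZ} {i j : Fin 3} (h : A' = (glz i * glz j) * A)
    (hA' : mkP A' ∈ KK) : mkP A ∈ KK := by
  have h2 : mkP A' = genK i * genK j * mkP A := by
    rw [h, mkP_mul, mkP_mul, genK_eq, genK_eq]
  have h3 : mkP A = (genK i * genK j)⁻¹ * mkP A' := by
    rw [h2]; group
  rw [h3]
  exact mul_mem (inv_mem (mul_mem (genK_mem_KK i) (genK_mem_KK j))) hA'

lemma negK_mem_iff {A : GLZ} :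
    mkP (-A) ∈ KK ↔ mkP A ∈ KK := by
  rw [mkP_neg]

lemma val01 (A : GLZ) :
    ((glz 0 * glz 1) * A).val 0 0 = A.val 0 0 + 2 * A.val 1 0 ∧
    ((glz 0 * glz 1) * A).val 0 1 = A.val 0 1 + 2 * A.val 1 1 ∧
    ((glz 0 * glz 1) * A).val 1 0 = A.val 1 0 ∧
    ((glz 0 * glz 1) * A).val 1 1 = A.val 1 1 := by
  refine ⟨?_, ?_, ?_, ?_⟩ <;>
    (show ((gm 0 * gm 1) * A.val) _ _ = _;
     simp [gm, Matrix.mul_apply, Fin.sum_univ_two]) <;> ring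

lemma val10 (A : GLZ) :
    ((glz 1 * glz 0) * A).val 0 0 = A.val 0 0 - 2 * A.val 1 0 ∧
    ((glz 1 * glz 0) * A).val 0 1 = A.val 0 1 - 2 * A.val 1 1 ∧
    ((glz 1 * glz 0) * A).val 1 0 = A.val 1 0 ∧
    ((glz 1 * glz 0) * A).val 1 1 = A.val 1 1 := by
  refine ⟨?_, ?_, ?_, ?_⟩ <;>
    (show ((gm 1 * gm 0) * A.val) _ _ = _;
     simp [gm, Matrix.mul_apply, Fin.sum_univ_two]) <;> ring

lemma val02 (A : GLZ) :
    ((glz 0 * glz 2) * A).val 0 0 = A.val 0 0 ∧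
    ((glz 0 * glz 2) * A).val 0 1 = A.val 0 1 ∧
    ((glz 0 * glz 2) * A).val 1 0 = A.val 1 0 - 2 * A.val 0 0 ∧
    ((glz 0 * glz 2) * A).val 1 1 = A.val 1 1 - 2 * A.val 0 1 := by
  refine ⟨?_, ?_, ?_, ?_⟩ <;>
    (show ((gm 0 * gm 2) * A.val) _ _ = _;
     simp [gm, Matrix.mul_apply, Fin.sum_univ_two]) <;> ring

lemma val20 (A : GLZ) :
    ((glz 2 * glz 0) * A).val 0 0 = A.val 0 0 ∧
    ((glz 2 * glz 0) * A).val 0 1 = A.val 0 1 ∧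
    ((glz 2 * glz 0) * A).val 1 0 = A.val 1 0 + 2 * A.val 0 0 ∧
    ((glz 2 * glz 0) * A).val 1 1 = A.val 1 1 + 2 * A.val 0 1 := by
  refine ⟨?_, ?_, ?_, ?_⟩ <;>
    (show ((gm 2 * gm 0) * A.val) _ _ = _;
     simp [gm, Matrix.mul_apply, Fin.sum_univ_two]) <;> ring

lemma det_pm (A : GLZ) : A.val.det = 1 ∨ A.val.det = -1 := by
  have h : A.val.det * (A⁻¹).val.det = 1 := by
    rw [← Matrix.det_mul]
    have : A.val * (A⁻¹).val = 1 := by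
      rw [← Units.val_mul, mul_inv_cancel]; rfl
    rw [this, Matrix.det_one]
  exact Int.isUnit_iff.mp (IsUnit.of_mul_eq_one _ h)
lemma reduceB0 (A : GLZ) (h00 : A.val 0 0 = 1) (h10 : A.val 1 0 = 0)
    (hb : A.val 0 1 = 0) (h11 : A.val 1 1 = 1 ∨ A.val 1 1 = -1) : mkP A ∈ KK := by
  rcases h11 with hd | hd
  · have hA : A = 1 := by
      apply Units.ext
      ext a b
      fin_cases a <;> fin_cases b <;> simp_all [Matrix.one_apply]
    rw [hA, show mkP 1 = 1 from rfl]
    exact one_mem _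
  · have hA : A = glz 0 := by
      apply Units.ext
      ext a b
      fin_cases a <;> fin_cases b <;> simp_all [glz, mkInv, gm]
    rw [hA, ← genK_eq]
    exact genK_mem_KK 0

lemma reduceB : ∀ m : ℕ, ∀ A : GLZ, A.val 0 0 = 1 → A.val 1 0 = 0 →
    A.val 0 1 % 2 = 0 → (A.val 1 1 = 1 ∨ A.val 1 1 = -1) →
    (A.val 0 1).natAbs ≤ m → mkP A ∈ KK := by
  intro m
  induction m with
  | zero =>
    intro A h00 h10 h01 h11 hm
    exact reduceB0 A h00 h10 (by omega) h11
  | succ m ih =>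
    intro A h00 h10 h01 h11 hm
    by_cases hb0 : A.val 0 1 = 0
    · exact reduceB0 A h00 h10 hb0 h11
    rcases (show 0 < A.val 0 1 ∨ A.val 0 1 < 0 by omega) with hb | hb <;> rcases h11 with hd | hd
    · -- b > 0, d = 1 : use glz 1 * glz 0, b' = b - 2
      obtain ⟨e00, e01, e10, e11⟩ := val10 A
      refine step_mem rfl (ih ((glz 1 * glz 0) * A) ?_ ?_ ?_ ?_ ?_) <;>
        simp only [e00, e01, e10, e11] <;> omega
    · -- b > 0, d = -1 : use glz 0 * glz 1, b' = b + 2d = b - 2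
      obtain ⟨e00, e01, e10, e11⟩ := val01 A
      refine step_mem rfl (ih ((glz 0 * glz 1) * A) ?_ ?_ ?_ ?_ ?_) <;>
        simp only [e00, e01, e10, e11] <;> omega
    · -- b < 0, d = 1 : use glz 0 * glz 1, b' = b + 2
      obtain ⟨e00, e01, e10, e11⟩ := val01 A
      refine step_mem rfl (ih ((glz 0 * glz 1) * A) ?_ ?_ ?_ ?_ ?_) <;>
        simp only [e00, e01, e10, e11] <;> omega
    · -- b < 0, d = -1 : use glz 1 * glz 0, b' = b - 2d = b + 2
      obtain ⟨e00, e01, e10, e11⟩ := val10 A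
      refine step_mem rfl (ih ((glz 1 * glz 0) * A) ?_ ?_ ?_ ?_ ?_) <;>
        simp only [e00, e01, e10, e11] <;> omega
lemma reduceA : ∀ n : ℕ, ∀ A : GLZ,
    A.val 0 0 % 2 = 1 → A.val 0 1 % 2 = 0 → A.val 1 0 % 2 = 0 → A.val 1 1 % 2 = 1 →
    (A.val 0 0).natAbs + (A.val 1 0).natAbs ≤ n → mkP A ∈ KK := by
  intro n
  induction n with
  | zero => intro A h00 h01 h10 h11 hm; omega
  | succ n ih =>
    intro A h00 h01 h10 h11 hm
    by_cases hc : A.val 1 0 = 0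
    · -- first column is (a, 0), a = ±1
      have hdet := det_pm A
      rw [Matrix.det_fin_two, hc, mul_zero, sub_zero] at hdet
      have ha : A.val 0 0 = 1 ∨ A.val 0 0 = -1 := by
        rcases hdet with h | h
        · exact Int.isUnit_iff.mp (IsUnit.of_mul_eq_one _ h)
        · refine Int.isUnit_iff.mp (IsUnit.of_mul_eq_one (-(A.val 1 1)) ?_)
          rw [mul_neg, h]; norm_num
      have hd : A.val 1 1 = 1 ∨ A.val 1 1 = -1 := by
        rcases ha with h | h <;> rw [h] at hdet <;> omega
      rcases ha with h | h
      · exact reduceB (A.val 0 1).natAbs A h hc h01 hd le_rfl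
      · refine (negK_mem_iff).mp (reduceB ((-A).val 0 1).natAbs (-A) ?_ ?_ ?_ ?_ le_rfl) <;>
          simp only [Units.val_neg, Matrix.neg_apply] <;> omega
    · have ha0 : A.val 0 0 ≠ 0 := by omega
      have hne : (A.val 0 0).natAbs ≠ (A.val 1 0).natAbs := by omega
      rcases lt_or_gt_of_ne hne with hlt | hgt
      · -- |a| < |c| : operate on the second row
        rcases (show (0 < A.val 0 0 ∧ 0 < A.val 1 0) ∨ (A.val 0 0 < 0 ∧ A.val 1 0 < 0) ∨
            ((0 < A.val 0 0 ∧ A.val 1 0 < 0) ∨ (A.val 0 0 < 0 ∧ 0 < A.val 1 0)) by omega)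
          with h | h | h
        · obtain ⟨e00, e01, e10, e11⟩ := val02 A
          refine step_mem rfl (ih ((glz 0 * glz 2) * A) ?_ ?_ ?_ ?_ ?_) <;>
            simp only [e00, e01, e10, e11] <;> omega
        · obtain ⟨e00, e01, e10, e11⟩ := val02 A
          refine step_mem rfl (ih ((glz 0 * glz 2) * A) ?_ ?_ ?_ ?_ ?_) <;>
            simp only [e00, e01, e10, e11] <;> omega
        · obtain ⟨e00, e01, e10, e11⟩ := val20 A
          refine step_mem rfl (ih ((glz 2 * glz 0) * A) ?_ ?_ ?_ ?_ ?_) <;>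
            simp only [e00, e01, e10, e11] <;> omega
      · -- |c| < |a| : operate on the first row
        rcases (show (0 < A.val 0 0 ∧ 0 < A.val 1 0) ∨ (A.val 0 0 < 0 ∧ A.val 1 0 < 0) ∨
            ((0 < A.val 0 0 ∧ A.val 1 0 < 0) ∨ (A.val 0 0 < 0 ∧ 0 < A.val 1 0)) by omega)
          with h | h | h
        · obtain ⟨e00, e01, e10, e11⟩ := val10 A
          refine step_mem rfl (ih ((glz 1 * glz 0) * A) ?_ ?_ ?_ ?_ ?_) <;>
            simp only [e00, e01, e10, e11] <;> omega
        · obtain ⟨e00, e01, e10, e11⟩ := val10 A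
          refine step_mem rfl (ih ((glz 1 * glz 0) * A) ?_ ?_ ?_ ?_ ?_) <;>
            simp only [e00, e01, e10, e11] <;> omega
        · obtain ⟨e00, e01, e10, e11⟩ := val01 A
          refine step_mem rfl (ih ((glz 0 * glz 1) * A) ?_ ?_ ?_ ?_ ?_) <;>
            simp only [e00, e01, e10, e11] <;> omega
lemma mkP_surj : Function.Surjective mkP := QuotientGroup.mk_surjective

lemma genK_ne_one (i : Fin 3) : genK i ≠ 1 := by
  intro h
  have h2 := freeness [i] (List.isChain_singleton i) (by simp [h])
  simp at h2

/-- The subgroup `K ⊂ PGL(2, ℤ)` of classes of matrices congruent to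
the identity mod 2 is freely generated by the three involutions `g₁, g₂, g₃`; i.e.
`K ≅ ℤ/2 * ℤ/2 * ℤ/2` with these generators: the `gᵢ` are nontrivial involutions
lying in `K`, they generate `K`, and no alternating (reduced) nonempty word in them
is trivial. -/
theorem K_free_product_of_three_involutions :
    (∀ i : Fin 3, genK i ∈ Kcongr ∧ genK i * genK i = 1 ∧ genK i ≠ 1) ∧
    Subgroup.closure {genK 0, genK 1, genK 2} = Kcongr ∧
    (∀ l : List (Fin 3), l.Chain' (· ≠ ·) → (l.map genK).prod = 1 → l = []) := by
  refine ⟨fun i => ⟨genK_mem i, genK_sq i, genK_ne_one i⟩, le_antisymm ?_ ?_, freeness⟩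
  · refine (Subgroup.closure_le _).mpr ?_
    intro x hx
    simp only [Set.mem_insert_iff, Set.mem_singleton_iff] at hx
    rcases hx with rfl | rfl | rfl <;> exact genK_mem _
  · intro x hx
    obtain ⟨A, rfl⟩ := mkP_surj x
    obtain ⟨p1, p2, p3, p4⟩ := mem_Kcongr_entries hx
    exact reduceA _ A p1 p2 p3 p4 le_rfl
end

section
/- Let D_q be the algebra generated by X^{±1}, P^{±1} with relation PX = qXP, where q ∈ C^* is not a root of unity. Then the zeroth Hochschild homology HH_0(D_q) = D_q/[D_q, D_q] is one-dimensional, spanned by the class of 1; equivalently, the commutator subspace [D_q, D_q] is spanned by the monomials X^i P^j with (i,j) ≠ (0,0). -/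
/-- Relations presenting the quantum torus `D_q = ℂ⟨X^{±1}, P^{±1}⟩ / (PX = qXP)`:
generators `0 ↦ X`, `1 ↦ X⁻¹`, `2 ↦ P`, `3 ↦ P⁻¹`. -/
inductive QTRel (q : ℂ) : FreeAlgebra ℂ (Fin 4) → FreeAlgebra ℂ (Fin 4) → Prop
  | x_xinv : QTRel q (FreeAlgebra.ι ℂ 0 * FreeAlgebra.ι ℂ 1) 1
  | xinv_x : QTRel q (FreeAlgebra.ι ℂ 1 * FreeAlgebra.ι ℂ 0) 1
  | p_pinv : QTRel q (FreeAlgebra.ι ℂ 2 * FreeAlgebra.ι ℂ 3) 1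
  | pinv_p : QTRel q (FreeAlgebra.ι ℂ 3 * FreeAlgebra.ι ℂ 2) 1
  | px_qxp : QTRel q (FreeAlgebra.ι ℂ 2 * FreeAlgebra.ι ℂ 0)
      (q • (FreeAlgebra.ι ℂ 0 * FreeAlgebra.ι ℂ 2))

/-- The quantum torus algebra `D_q`. -/
abbrev QTorus (q : ℂ) := RingQuot (QTRel q)

noncomputable def Xgen (q : ℂ) : QTorus q := RingQuot.mkAlgHom ℂ (QTRel q) (FreeAlgebra.ι ℂ 0)
noncomputable def XgenInv (q : ℂ) : QTorus q := RingQuot.mkAlgHom ℂ (QTRel q) (FreeAlgebra.ι ℂ 1)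
noncomputable def Pgen (q : ℂ) : QTorus q := RingQuot.mkAlgHom ℂ (QTRel q) (FreeAlgebra.ι ℂ 2)
noncomputable def PgenInv (q : ℂ) : QTorus q := RingQuot.mkAlgHom ℂ (QTRel q) (FreeAlgebra.ι ℂ 3)

/-- The monomial `Xⁱ Pʲ ∈ D_q` for `i, j : ℤ`. -/
noncomputable def qmon (q : ℂ) (i j : ℤ) : QTorus q :=
  (if 0 ≤ i then Xgen q ^ i.toNat else XgenInv q ^ (-i).toNat) *
  (if 0 ≤ j then Pgen q ^ j.toNat else PgenInv q ^ (-j).toNat)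

/-- The commutator subspace `[D_q, D_q]`. -/
noncomputable def commSpace (q : ℂ) : Submodule ℂ (QTorus q) :=
  Submodule.span ℂ {x | ∃ a b : QTorus q, x = a * b - b * a}

namespace QTaux
variable {q : ℂ}

lemma x_xinv : Xgen q * XgenInv q = 1 := by
  rw [Xgen, XgenInv, ← map_mul, RingQuot.mkAlgHom_rel ℂ QTRel.x_xinv, map_one]
lemma xinv_x : XgenInv q * Xgen q = 1 := by
  rw [Xgen, XgenInv, ← map_mul, RingQuot.mkAlgHom_rel ℂ QTRel.xinv_x, map_one]
lemma p_pinv : Pgen q * PgenInv q = 1 := by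
  rw [Pgen, PgenInv, ← map_mul, RingQuot.mkAlgHom_rel ℂ QTRel.p_pinv, map_one]
lemma pinv_p : PgenInv q * Pgen q = 1 := by
  rw [Pgen, PgenInv, ← map_mul, RingQuot.mkAlgHom_rel ℂ QTRel.pinv_p, map_one]
lemma px_qxp : Pgen q * Xgen q = q • (Xgen q * Pgen q) := by
  rw [Pgen, Xgen, ← map_mul, RingQuot.mkAlgHom_rel ℂ QTRel.px_qxp, map_smul, map_mul]

/-- X as a unit -/
noncomputable def Xu (q : ℂ) : (QTorus q)ˣ := ⟨Xgen q, XgenInv q, x_xinv, xinv_x⟩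
noncomputable def Pu (q : ℂ) : (QTorus q)ˣ := ⟨Pgen q, PgenInv q, p_pinv, pinv_p⟩

lemma val_zpow_X (i : ℤ) :
    ((Xu q ^ i : (QTorus q)ˣ) : QTorus q)
      = if 0 ≤ i then Xgen q ^ i.toNat else XgenInv q ^ (-i).toNat := by
  rcases le_or_gt 0 i with h | h
  · rw [if_pos h]
    obtain ⟨n, rfl⟩ := Int.eq_ofNat_of_zero_le h
    simp [zpow_natCast, Units.val_pow_eq_pow_val, Xu]
  · rw [if_neg (not_le.mpr h)]
    obtain ⟨n, rfl⟩ : ∃ n : ℕ, i = -(n : ℤ) := ⟨(-i).toNat, by omega⟩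
    have : ((Xu q)⁻¹ : (QTorus q)ˣ) = ⟨XgenInv q, Xgen q, xinv_x, x_xinv⟩ := by
      ext; rfl
    rw [zpow_neg, zpow_natCast, ← inv_pow, this, Units.val_pow_eq_pow_val]
    simp

lemma val_zpow_P (j : ℤ) :
    ((Pu q ^ j : (QTorus q)ˣ) : QTorus q)
      = if 0 ≤ j then Pgen q ^ j.toNat else PgenInv q ^ (-j).toNat := by
  rcases le_or_gt 0 j with h | h
  · rw [if_pos h]
    obtain ⟨n, rfl⟩ := Int.eq_ofNat_of_zero_le h
    simp [zpow_natCast, Units.val_pow_eq_pow_val, Pu]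
  · rw [if_neg (not_le.mpr h)]
    obtain ⟨n, rfl⟩ : ∃ n : ℕ, j = -(n : ℤ) := ⟨(-j).toNat, by omega⟩
    have : ((Pu q)⁻¹ : (QTorus q)ˣ) = ⟨PgenInv q, Pgen q, pinv_p, p_pinv⟩ := by
      ext; rfl
    rw [zpow_neg, zpow_natCast, ← inv_pow, this, Units.val_pow_eq_pow_val]
    simp

lemma qmon_eq (i j : ℤ) :
    qmon q i j = ((Xu q ^ i : (QTorus q)ˣ) : QTorus q) * ((Pu q ^ j : (QTorus q)ˣ) : QTorus q) := by
  rw [qmon, val_zpow_X, val_zpow_P]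

/-- commute `Pgen` past an integer power of `X`. -/
lemma p_xzpow (hq : q ≠ 0) (a : ℤ) :
    Pgen q * ((Xu q ^ a : (QTorus q)ˣ) : QTorus q)
      = q ^ a • (((Xu q ^ a : (QTorus q)ˣ) : QTorus q) * Pgen q) := by
  induction a using Int.induction_on with
  | zero => simp
  | succ n ih =>
      have hx : ((Xu q ^ ((n : ℤ) + 1) : (QTorus q)ˣ) : QTorus q)
          = ((Xu q ^ (n : ℤ) : (QTorus q)ˣ) : QTorus q) * Xgen q := by
        rw [zpow_add_one (Xu q), Units.val_mul]; rfl
      rw [hx, ← mul_assoc, ih, smul_mul_assoc, mul_assoc, px_qxp, mul_smul_comm,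
        ← mul_assoc, smul_smul, zpow_add_one₀ hq]
  | pred n ih =>
      have hx : ((Xu q ^ (-(n : ℤ) - 1) : (QTorus q)ˣ) : QTorus q)
          = ((Xu q ^ (-(n : ℤ)) : (QTorus q)ˣ) : QTorus q) * XgenInv q := by
        rw [zpow_sub_one (Xu q), Units.val_mul]; rfl
      have pxinv : Pgen q * XgenInv q = q⁻¹ • (XgenInv q * Pgen q) := by
        have h1 : XgenInv q * (Pgen q * Xgen q) * XgenInv q
            = XgenInv q * (q • (Xgen q * Pgen q)) * XgenInv q := by rw [px_qxp]
        have h2 : XgenInv q * (Pgen q * Xgen q) * XgenInv q = XgenInv q * Pgen q := by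
          rw [mul_assoc, mul_assoc, x_xinv, mul_one]
        have h3 : XgenInv q * (q • (Xgen q * Pgen q)) * XgenInv q
            = q • (Pgen q * XgenInv q) := by
          rw [mul_smul_comm, smul_mul_assoc, ← mul_assoc, xinv_x, one_mul]
        rw [h2, h3] at h1
        rw [h1, smul_smul, inv_mul_cancel₀ hq, one_smul]
      rw [hx, ← mul_assoc, ih, smul_mul_assoc, mul_assoc, pxinv, mul_smul_comm,
        ← mul_assoc, smul_smul, zpow_sub_one₀ hq]

/-- commute integer powers of `P` past integer powers of `X`. -/
lemma pzpow_xzpow (hq : q ≠ 0) (b a : ℤ) :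
    ((Pu q ^ b : (QTorus q)ˣ) : QTorus q) * ((Xu q ^ a : (QTorus q)ˣ) : QTorus q)
      = q ^ (a * b) • (((Xu q ^ a : (QTorus q)ˣ) : QTorus q) * ((Pu q ^ b : (QTorus q)ˣ) : QTorus q)) := by
  induction b using Int.induction_on with
  | zero => simp
  | succ n ih =>
      have hp' : ((Pu q ^ ((n : ℤ) + 1) : (QTorus q)ˣ) : QTorus q)
          = ((Pu q ^ (n : ℤ) : (QTorus q)ˣ) : QTorus q) * Pgen q := by
        rw [zpow_add_one (Pu q), Units.val_mul]; rfl
      rw [hp', mul_assoc, p_xzpow hq, mul_smul_comm, ← mul_assoc, ih, smul_mul_assoc,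
        smul_smul, mul_assoc, ← zpow_add₀ hq]
      ring_nf
  | pred n ih =>
      have hp' : ((Pu q ^ (-(n : ℤ) - 1) : (QTorus q)ˣ) : QTorus q)
          = ((Pu q ^ (-(n : ℤ)) : (QTorus q)ˣ) : QTorus q) * PgenInv q := by
        rw [zpow_sub_one (Pu q), Units.val_mul]; rfl
      have pinvx : PgenInv q * ((Xu q ^ a : (QTorus q)ˣ) : QTorus q)
          = q ^ (-a) • (((Xu q ^ a : (QTorus q)ˣ) : QTorus q) * PgenInv q) := by
        have h1 : PgenInv q * (Pgen q * ((Xu q ^ a : (QTorus q)ˣ) : QTorus q)) * PgenInv q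
            = PgenInv q * (q ^ a • (((Xu q ^ a : (QTorus q)ˣ) : QTorus q) * Pgen q)) * PgenInv q := by
          rw [p_xzpow hq]
        have h2 : PgenInv q * (Pgen q * ((Xu q ^ a : (QTorus q)ˣ) : QTorus q)) * PgenInv q
            = ((Xu q ^ a : (QTorus q)ˣ) : QTorus q) * PgenInv q := by
          rw [← mul_assoc, pinv_p, one_mul]
        have h3 : PgenInv q * (q ^ a • (((Xu q ^ a : (QTorus q)ˣ) : QTorus q) * Pgen q)) * PgenInv q
            = q ^ a • (PgenInv q * ((Xu q ^ a : (QTorus q)ˣ) : QTorus q)) := by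
          rw [mul_smul_comm, smul_mul_assoc, mul_assoc, mul_assoc, p_pinv, mul_one]
        rw [h2, h3] at h1
        rw [h1, smul_smul, ← zpow_add₀ hq]
        simp
      rw [hp', mul_assoc, pinvx, mul_smul_comm, ← mul_assoc, ih, smul_mul_assoc,
        smul_smul, mul_assoc, ← zpow_add₀ hq]
      ring_nf

lemma qmon_mul (hq : q ≠ 0) (i j i' j' : ℤ) :
    qmon q i j * qmon q i' j' = q ^ (i' * j) • qmon q (i + i') (j + j') := by
  rw [qmon_eq, qmon_eq, qmon_eq, mul_assoc, ← mul_assoc _ ((Xu q ^ i' : (QTorus q)ˣ) : QTorus q),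
    pzpow_xzpow hq, smul_mul_assoc, mul_smul_comm, zpow_add (Xu q), zpow_add (Pu q),
    Units.val_mul, Units.val_mul, mul_assoc]
  rw [← mul_assoc ((Xu q ^ i : (QTorus q)ˣ) : QTorus q)]

/-! ### The representation on `(ℤ × ℤ) →₀ ℂ` -/

abbrev M := (ℤ × ℤ) →₀ ℂ

noncomputable def act (s : ℤ × ℤ → ℤ × ℤ) (c : ℤ × ℤ → ℂ) : M →ₗ[ℂ] M :=
  Finsupp.lsum ℂ (fun v => c v • Finsupp.lsingle (s v))

lemma act_single (s : ℤ × ℤ → ℤ × ℤ) (c : ℤ × ℤ → ℂ) (v : ℤ × ℤ) (a : ℂ) :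
    act s c (Finsupp.single v a) = Finsupp.single (s v) (c v * a) := by
  rw [act, Finsupp.lsum_single, LinearMap.smul_apply, Finsupp.lsingle_apply,
    Finsupp.smul_single, smul_eq_mul]

noncomputable def xE : Module.End ℂ M := act (fun v => (v.1 + 1, v.2)) (fun _ => 1)
noncomputable def xIE : Module.End ℂ M := act (fun v => (v.1 - 1, v.2)) (fun _ => 1)
noncomputable def pE (q : ℂ) : Module.End ℂ M := act (fun v => (v.1, v.2 + 1)) (fun v => q ^ v.1)
noncomputable def pIE (q : ℂ) : Module.End ℂ M :=
  act (fun v => (v.1, v.2 - 1)) (fun v => q ^ (-v.1))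

noncomputable def freeRep (q : ℂ) : FreeAlgebra ℂ (Fin 4) →ₐ[ℂ] Module.End ℂ M :=
  FreeAlgebra.lift ℂ ![xE, xIE, pE q, pIE q]

lemma freeRep_rel (hq : q ≠ 0) ⦃x y : FreeAlgebra ℂ (Fin 4)⦄ (h : QTRel q x y) :
    freeRep q x = freeRep q y := by
  induction h with
  | x_xinv =>
      rw [map_mul, map_one, freeRep, FreeAlgebra.lift_ι_apply, FreeAlgebra.lift_ι_apply]
      refine Finsupp.lhom_ext fun v a => ?_
      obtain ⟨i, j⟩ := v
      show xE (xIE _) = _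
      rw [xIE, xE, act_single, act_single]
      simp
  | xinv_x =>
      rw [map_mul, map_one, freeRep, FreeAlgebra.lift_ι_apply, FreeAlgebra.lift_ι_apply]
      refine Finsupp.lhom_ext fun v a => ?_
      obtain ⟨i, j⟩ := v
      show xIE (xE _) = _
      rw [xIE, xE, act_single, act_single]
      simp
  | p_pinv =>
      rw [map_mul, map_one, freeRep, FreeAlgebra.lift_ι_apply, FreeAlgebra.lift_ι_apply]
      refine Finsupp.lhom_ext fun v a => ?_
      obtain ⟨i, j⟩ := v
      show pE q (pIE q _) = _
      rw [pIE, pE, act_single, act_single]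
      simp only [Module.End.one_apply]
      rw [← mul_assoc, ← zpow_add₀ hq]
      simp
  | pinv_p =>
      rw [map_mul, map_one, freeRep, FreeAlgebra.lift_ι_apply, FreeAlgebra.lift_ι_apply]
      refine Finsupp.lhom_ext fun v a => ?_
      obtain ⟨i, j⟩ := v
      show pIE q (pE q _) = _
      rw [pE, pIE, act_single, act_single]
      simp only [Module.End.one_apply]
      rw [← mul_assoc, ← zpow_add₀ hq]
      simp
  | px_qxp =>
      rw [map_mul, map_smul, map_mul, freeRep, FreeAlgebra.lift_ι_apply,
        FreeAlgebra.lift_ι_apply]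
      show pE q * xE = q • (xE * pE q)
      refine Finsupp.lhom_ext fun v a => ?_
      obtain ⟨i, j⟩ := v
      show pE q (xE _) = (q • (xE * pE q)) _
      rw [LinearMap.smul_apply, Module.End.mul_apply, xE, pE, act_single, act_single,
        act_single, act_single, Finsupp.smul_single]
      congr 1
      rw [zpow_add_one₀ hq, smul_eq_mul]
      ring

noncomputable def rep (q : ℂ) (hq : q ≠ 0) : QTorus q →ₐ[ℂ] Module.End ℂ M :=
  RingQuot.liftAlgHom ℂ ⟨freeRep q, freeRep_rel hq⟩

lemma rep_Xgen (hq : q ≠ 0) : rep q hq (Xgen q) = xE := by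
  rw [rep, Xgen, RingQuot.liftAlgHom_mkAlgHom_apply, freeRep, FreeAlgebra.lift_ι_apply]; rfl
lemma rep_XgenInv (hq : q ≠ 0) : rep q hq (XgenInv q) = xIE := by
  rw [rep, XgenInv, RingQuot.liftAlgHom_mkAlgHom_apply, freeRep, FreeAlgebra.lift_ι_apply]; rfl
lemma rep_Pgen (hq : q ≠ 0) : rep q hq (Pgen q) = pE q := by
  rw [rep, Pgen, RingQuot.liftAlgHom_mkAlgHom_apply, freeRep, FreeAlgebra.lift_ι_apply]; rfl
lemma rep_PgenInv (hq : q ≠ 0) : rep q hq (PgenInv q) = pIE q := by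
  rw [rep, PgenInv, RingQuot.liftAlgHom_mkAlgHom_apply, freeRep, FreeAlgebra.lift_ι_apply]; rfl

lemma xE_pow (n : ℕ) (v : ℤ × ℤ) (a : ℂ) :
    (xE ^ n) (Finsupp.single v a) = Finsupp.single (v.1 + n, v.2) a := by
  induction n with
  | zero => simp
  | succ n ih =>
      rw [pow_succ', Module.End.mul_apply, ih, xE, act_single, one_mul]
      congr 2
      push_cast; ring

lemma xIE_pow (n : ℕ) (v : ℤ × ℤ) (a : ℂ) :
    (xIE ^ n) (Finsupp.single v a) = Finsupp.single (v.1 - n, v.2) a := by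
  induction n with
  | zero => simp
  | succ n ih =>
      rw [pow_succ', Module.End.mul_apply, ih, xIE, act_single, one_mul]
      congr 2
      push_cast; ring

lemma pE_pow (n : ℕ) (v : ℤ × ℤ) (a : ℂ) :
    ((pE q) ^ n) (Finsupp.single v a) = Finsupp.single (v.1, v.2 + n) ((q ^ v.1) ^ n * a) := by
  induction n with
  | zero => simp
  | succ n ih =>
      rw [pow_succ', Module.End.mul_apply, ih, pE, act_single]
      rw [show ((v.1, v.2 + (n : ℤ)) : ℤ × ℤ).1 = v.1 from rfl,
        show (q ^ v.1) * ((q ^ v.1) ^ n * a) = (q ^ v.1) ^ (n + 1) * a from by rw [pow_succ]; ring]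
      congr 2
      push_cast
      show v.2 + (n : ℤ) + 1 = v.2 + ((n : ℤ) + 1)
      ring

lemma pIE_pow (n : ℕ) (v : ℤ × ℤ) (a : ℂ) :
    ((pIE q) ^ n) (Finsupp.single v a) = Finsupp.single (v.1, v.2 - n) ((q ^ (-v.1)) ^ n * a) := by
  induction n with
  | zero => simp
  | succ n ih =>
      rw [pow_succ', Module.End.mul_apply, ih, pIE, act_single]
      rw [show ((v.1, v.2 - (n : ℤ)) : ℤ × ℤ).1 = v.1 from rfl,
        show (q ^ (-v.1)) * ((q ^ (-v.1)) ^ n * a) = (q ^ (-v.1)) ^ (n + 1) * a from by rw [pow_succ]; ring]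
      congr 2
      push_cast
      show v.2 - (n : ℤ) - 1 = v.2 - ((n : ℤ) + 1)
      ring

lemma rep_qmon (hq : q ≠ 0) (i j : ℤ) :
    rep q hq (qmon q i j) (Finsupp.single ((0 : ℤ), (0 : ℤ)) 1) = Finsupp.single (i, j) 1 := by
  rw [qmon, map_mul, Module.End.mul_apply]
  have hP : rep q hq (if 0 ≤ j then Pgen q ^ j.toNat else PgenInv q ^ (-j).toNat)
      (Finsupp.single ((0 : ℤ), (0 : ℤ)) 1) = Finsupp.single ((0 : ℤ), j) 1 := by
    rcases le_or_gt 0 j with h | h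
    · rw [if_pos h, map_pow, rep_Pgen hq, pE_pow]
      rw [show ((((0:ℤ),(0:ℤ)) : ℤ × ℤ).1, (((0:ℤ),(0:ℤ)) : ℤ × ℤ).2 + (j.toNat : ℤ))
          = ((0:ℤ), j) from by simp [Int.toNat_of_nonneg h]]
      norm_num
    · rw [if_neg (not_le.mpr h), map_pow, rep_PgenInv hq, pIE_pow]
      rw [show ((((0:ℤ),(0:ℤ)) : ℤ × ℤ).1, (((0:ℤ),(0:ℤ)) : ℤ × ℤ).2 - (((-j).toNat) : ℤ))
          = ((0:ℤ), j) from by simp; omega]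
      norm_num
  rw [hP]
  rcases le_or_gt 0 i with h | h
  · rw [if_pos h, map_pow, rep_Xgen hq, xE_pow]
    rw [show ((((0:ℤ), j) : ℤ × ℤ).1 + (i.toNat : ℤ), (((0:ℤ), j) : ℤ × ℤ).2)
        = (i, j) from by simp [Int.toNat_of_nonneg h]]
  · rw [if_neg (not_le.mpr h), map_pow, rep_XgenInv hq, xIE_pow]
    rw [show ((((0:ℤ), j) : ℤ × ℤ).1 - (((-i).toNat) : ℤ), (((0:ℤ), j) : ℤ × ℤ).2)
        = (i, j) from by simp; omega]

noncomputable def τ (q : ℂ) (hq : q ≠ 0) : QTorus q →ₗ[ℂ] ℂ :=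
  (Finsupp.lapply ((0 : ℤ), (0 : ℤ))).comp
    ((LinearMap.applyₗ (Finsupp.single ((0 : ℤ), (0 : ℤ)) (1 : ℂ))).comp (rep q hq).toLinearMap)

lemma τ_qmon (hq : q ≠ 0) (i j : ℤ) (h : (i, j) ≠ ((0 : ℤ), (0 : ℤ))) :
    τ q hq (qmon q i j) = 0 := by
  rw [τ]
  simp only [LinearMap.comp_apply, LinearMap.applyₗ_apply_apply, AlgHom.toLinearMap_apply,
    Finsupp.lapply_apply]
  rw [rep_qmon hq, Finsupp.single_apply, if_neg h]

lemma τ_one (hq : q ≠ 0) : τ q hq 1 = 1 := by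
  rw [τ]
  simp only [LinearMap.comp_apply, AlgHom.toLinearMap_apply, map_one,
    LinearMap.applyₗ_apply_apply, Finsupp.lapply_apply, Module.End.one_apply]
  simp

/-! ### Spanning by monomials -/

lemma qmon_zero_zero : qmon q 0 0 = 1 := by simp [qmon]

noncomputable def Sspan (q : ℂ) : Submodule ℂ (QTorus q) :=
  Submodule.span ℂ (Set.range fun p : ℤ × ℤ => qmon q p.1 p.2)

lemma qmon_mem_S (i j : ℤ) : qmon q i j ∈ Sspan q := Submodule.subset_span ⟨(i, j), rfl⟩

lemma S_mul (hq : q ≠ 0) {a b : QTorus q} (ha : a ∈ Sspan q) (hb : b ∈ Sspan q) :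
    a * b ∈ Sspan q := by
  induction ha using Submodule.span_induction with
  | mem x hx =>
      obtain ⟨⟨i, j⟩, rfl⟩ := hx
      induction hb using Submodule.span_induction with
      | mem y hy =>
          obtain ⟨⟨i', j'⟩, rfl⟩ := hy
          rw [qmon_mul hq]
          exact Submodule.smul_mem _ _ (qmon_mem_S _ _)
      | zero => rw [mul_zero]; exact zero_mem _
      | add y z hy hz h1 h2 => rw [mul_add]; exact add_mem h1 h2
      | smul c y hy h1 => rw [mul_smul_comm]; exact Submodule.smul_mem _ _ h1
  | zero => rw [zero_mul]; exact zero_mem _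
  | add x y hx hy h1 h2 => rw [add_mul]; exact add_mem h1 h2
  | smul c x hx h1 => rw [smul_mul_assoc]; exact Submodule.smul_mem _ _ h1

lemma qmon_X : qmon q 1 0 = Xgen q := by norm_num [qmon]
lemma qmon_Xinv : qmon q (-1) 0 = XgenInv q := by norm_num [qmon]
lemma qmon_P : qmon q 0 1 = Pgen q := by norm_num [qmon]
lemma qmon_Pinv : qmon q 0 (-1) = PgenInv q := by norm_num [qmon]

lemma mem_S (hq : q ≠ 0) (z : QTorus q) : z ∈ Sspan q := by
  obtain ⟨w, rfl⟩ := RingQuot.mkAlgHom_surjective ℂ (QTRel q) z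
  induction w using FreeAlgebra.induction with
  | grade0 c =>
      rw [AlgHom.commutes, Algebra.algebraMap_eq_smul_one, ← qmon_zero_zero (q := q)]
      exact Submodule.smul_mem _ _ (qmon_mem_S 0 0)
  | grade1 g =>
      fin_cases g
      · show Xgen q ∈ Sspan q
        rw [← qmon_X]; exact qmon_mem_S 1 0
      · show XgenInv q ∈ Sspan q
        rw [← qmon_Xinv]; exact qmon_mem_S (-1) 0
      · show Pgen q ∈ Sspan q
        rw [← qmon_P]; exact qmon_mem_S 0 1
      · show PgenInv q ∈ Sspan q
        rw [← qmon_Pinv]; exact qmon_mem_S 0 (-1)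
  | mul a b ha hb => rw [map_mul]; exact S_mul hq ha hb
  | add a b ha hb => rw [map_add]; exact add_mem ha hb

/-! ### Commutators -/

lemma sub_mem_comm (a b : QTorus q) : a * b - b * a ∈ commSpace q :=
  Submodule.subset_span ⟨a, b, rfl⟩

lemma zpow_ne_one (hq : q ≠ 0) (hroot : ∀ n : ℕ, 0 < n → q ^ n ≠ 1) {i : ℤ} (hi : i ≠ 0) :
    q ^ i ≠ 1 := by
  intro hcon
  rcases lt_or_gt_of_ne hi with h | h
  · have h1 : q ^ ((-i).toNat) = 1 := by
      rw [← zpow_natCast, Int.toNat_of_nonneg (by omega), zpow_neg, hcon, inv_one]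
    exact hroot (-i).toNat (by omega) h1
  · have h1 : q ^ (i.toNat) = 1 := by
      rw [← zpow_natCast, Int.toNat_of_nonneg (by omega)]; exact hcon
    exact hroot i.toNat (by omega) h1

lemma qmon_mem_comm (hq : q ≠ 0) (hroot : ∀ n : ℕ, 0 < n → q ^ n ≠ 1) (i j : ℤ)
    (h : (i, j) ≠ ((0 : ℤ), (0 : ℤ))) : qmon q i j ∈ commSpace q := by
  by_cases hi : i = 0
  · subst hi
    have hj : j ≠ 0 := by rintro rfl; exact h rfl
    have key : qmon q 1 0 * qmon q (-1) j - qmon q (-1) j * qmon q 1 0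
        = (1 - q ^ j) • qmon q 0 j := by
      rw [qmon_mul hq, qmon_mul hq]
      rw [show (-1 : ℤ) * 0 = 0 from by ring, show (1 : ℤ) * j = j from by ring,
        show (1 : ℤ) + -1 = 0 from by ring, show (-1 : ℤ) + 1 = 0 from by ring,
        show (0 : ℤ) + j = j from by ring, show j + (0 : ℤ) = j from by ring,
        zpow_zero]
      module
    have hcoef : (1 - q ^ j) ≠ 0 := by
      intro hcon
      exact zpow_ne_one hq hroot hj (by linear_combination -hcon)
    have : qmon q 0 j = (1 - q ^ j)⁻¹ •
        (qmon q 1 0 * qmon q (-1) j - qmon q (-1) j * qmon q 1 0) := by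
      rw [key, smul_smul, inv_mul_cancel₀ hcoef, one_smul]
    rw [this]
    exact Submodule.smul_mem _ _ (sub_mem_comm _ _)
  · have key : qmon q 0 1 * qmon q i (j - 1) - qmon q i (j - 1) * qmon q 0 1
        = (q ^ i - 1) • qmon q i j := by
      rw [qmon_mul hq, qmon_mul hq]
      rw [show i * 1 = i from by ring, show (0 : ℤ) * (j - 1) = 0 from by ring,
        show (0 : ℤ) + i = i from by ring, show i + (0 : ℤ) = i from by ring,
        show (1 : ℤ) + (j - 1) = j from by ring, show (j - 1) + (1 : ℤ) = j from by ring,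
        zpow_zero]
      module
    have hcoef : (q ^ i - 1) ≠ 0 := sub_ne_zero.mpr (zpow_ne_one hq hroot hi)
    have : qmon q i j = (q ^ i - 1)⁻¹ •
        (qmon q 0 1 * qmon q i (j - 1) - qmon q i (j - 1) * qmon q 0 1) := by
      rw [key, smul_smul, inv_mul_cancel₀ hcoef, one_smul]
    rw [this]
    exact Submodule.smul_mem _ _ (sub_mem_comm _ _)

lemma comm_le_T (hq : q ≠ 0) :
    commSpace q ≤ Submodule.span ℂ {m | ∃ i j : ℤ, (i, j) ≠ (0, 0) ∧ m = qmon q i j} := by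
  set T := Submodule.span ℂ {m | ∃ i j : ℤ, (i, j) ≠ (0, 0) ∧ m = qmon q i j} with hT
  apply Submodule.span_le.mpr
  rintro x ⟨a, b, rfl⟩
  have ha := mem_S hq a
  have hb := mem_S hq b
  show a * b - b * a ∈ T
  induction ha using Submodule.span_induction with
  | mem x hx =>
      obtain ⟨⟨i, j⟩, rfl⟩ := hx
      induction hb using Submodule.span_induction with
      | mem y hy =>
          obtain ⟨⟨i', j'⟩, rfl⟩ := hy
          rw [qmon_mul hq, qmon_mul hq]
          by_cases hz : ((i + i', j + j') : ℤ × ℤ) = (0, 0)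
          · rw [Prod.mk.injEq] at hz
            have hi' : i' = -i := by omega
            have hj' : j' = -j := by omega
            subst hi' hj'
            rw [show i + -i = -i + i from by ring, show j + -j = -j + j from by ring,
              show (-i) * j = i * (-j) from by ring, sub_self]
            exact zero_mem _
          · refine sub_mem (Submodule.smul_mem _ _ ?_) (Submodule.smul_mem _ _ ?_)
            · exact Submodule.subset_span ⟨i + i', j + j', by simpa using hz, rfl⟩
            · refine Submodule.subset_span ⟨i' + i, j' + j, ?_, rfl⟩
              rw [add_comm i' i, add_comm j' j]
              simpa using hz
      | zero => rw [mul_zero, zero_mul, sub_zero]; exact zero_mem _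
      | add y z hy hz h1 h2 =>
          have : qmon q i j * (y + z) - (y + z) * qmon q i j
              = (qmon q i j * y - y * qmon q i j) + (qmon q i j * z - z * qmon q i j) := by
            rw [mul_add, add_mul]; abel
          rw [this]; exact add_mem h1 h2
      | smul c y hy h1 =>
          have : qmon q i j * (c • y) - (c • y) * qmon q i j
              = c • (qmon q i j * y - y * qmon q i j) := by
            rw [mul_smul_comm, smul_mul_assoc, smul_sub]
          rw [this]; exact Submodule.smul_mem _ _ h1
  | zero => rw [zero_mul, mul_zero, sub_zero]; exact zero_mem _
  | add x y hx hy h1 h2 =>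
      have : (x + y) * b - b * (x + y) = (x * b - b * x) + (y * b - b * y) := by
        rw [add_mul, mul_add]; abel
      rw [this]; exact add_mem h1 h2
  | smul c x hx h1 =>
      have : (c • x) * b - b * (c • x) = c • (x * b - b * x) := by
        rw [smul_mul_assoc, mul_smul_comm, smul_sub]
      rw [this]; exact Submodule.smul_mem _ _ h1

lemma τ_vanish_T (hq : q ≠ 0) {x : QTorus q}
    (hx : x ∈ Submodule.span ℂ {m | ∃ i j : ℤ, (i, j) ≠ (0, 0) ∧ m = qmon q i j}) :
    τ q hq x = 0 := by
  induction hx using Submodule.span_induction with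
  | mem y hy => obtain ⟨i, j, h, rfl⟩ := hy; exact τ_qmon hq i j h
  | zero => exact map_zero _
  | add y z hy hz h1 h2 => rw [map_add, h1, h2, add_zero]
  | smul c y hy h1 => rw [map_smul, h1, smul_zero]

end QTaux

/-- For `q ∈ ℂ*` not a root of unity, `HH₀(D_q) = D_q/[D_q, D_q]` is
one-dimensional, spanned by the class of `1`: every element is congruent to a scalar
modulo `[D_q, D_q]`, and `1 ∉ [D_q, D_q]`.  Equivalently, the commutator subspace
`[D_q, D_q]` is the span of the monomials `Xⁱ Pʲ` with `(i, j) ≠ (0, 0)`. -/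
theorem quantum_torus_HH0 (q : ℂ) (hq : q ≠ 0) (hroot : ∀ n : ℕ, 0 < n → q ^ n ≠ 1) :
    (∀ z : QTorus q, ∃ c : ℂ, z - algebraMap ℂ (QTorus q) c ∈ commSpace q) ∧
    (1 : QTorus q) ∉ commSpace q ∧
    commSpace q = Submodule.span ℂ
      {m | ∃ i j : ℤ, (i, j) ≠ (0, 0) ∧ m = qmon q i j} := by
  open QTaux in
  have hT_le : Submodule.span ℂ {m | ∃ i j : ℤ, (i, j) ≠ (0, 0) ∧ m = qmon q i j}
      ≤ commSpace q :=
    Submodule.span_le.mpr (by rintro m ⟨i, j, h, rfl⟩; exact qmon_mem_comm hq hroot i j h)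
  have hcomm_le := comm_le_T (q := q) hq
  refine ⟨?_, ?_, le_antisymm hcomm_le hT_le⟩
  · intro z
    have hz := mem_S hq z
    induction hz using Submodule.span_induction with
    | mem x hx =>
        obtain ⟨⟨i, j⟩, rfl⟩ := hx
        by_cases h : ((i, j) : ℤ × ℤ) = (0, 0)
        · refine ⟨1, ?_⟩
          rw [Prod.mk.injEq] at h
          obtain ⟨rfl, rfl⟩ := h
          show qmon q 0 0 - algebraMap ℂ (QTorus q) 1 ∈ commSpace q
          rw [map_one, qmon_zero_zero, sub_self]
          exact zero_mem _
        · refine ⟨0, ?_⟩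
          rw [map_zero, sub_zero]
          exact hT_le (Submodule.subset_span ⟨i, j, h, rfl⟩)
    | zero => exact ⟨0, by rw [map_zero, sub_zero]; exact zero_mem _⟩
    | add x y hx hy h1 h2 =>
        obtain ⟨c, hc⟩ := h1
        obtain ⟨d, hd⟩ := h2
        refine ⟨c + d, ?_⟩
        have : x + y - algebraMap ℂ (QTorus q) (c + d)
            = (x - algebraMap ℂ (QTorus q) c) + (y - algebraMap ℂ (QTorus q) d) := by
          rw [map_add]; abel
        rw [this]; exact add_mem hc hd
    | smul c x hx h1 =>
        obtain ⟨d, hd⟩ := h1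
        refine ⟨c * d, ?_⟩
        have : c • x - algebraMap ℂ (QTorus q) (c * d)
            = c • (x - algebraMap ℂ (QTorus q) d) := by
          rw [map_mul, ← Algebra.smul_def, smul_sub]
        rw [this]; exact Submodule.smul_mem _ _ hd
  · intro hmem
    have h0 : τ q hq 1 = 0 := τ_vanish_T hq (hcomm_le hmem)
    rw [τ_one hq] at h0
    exact one_ne_zero h0
end

section
/- Let D_q be the quantum torus with q not a root of unity and let s act on D_q by s(X) = X^{-1}, s(P) = P^{-1}. Consider the twisted trace space HH_0(D_q, sD_q) = D_q / span{ s(a)b - ba : a, b ∈ D_q }. This space is 4-dimensional, spanned by the classes of the monomials X^{ε_1} P^{ε_2} with ε_1, ε_2 ∈ {0,1}. -/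
/-- The subspace of `D_q` spanned by the elements `X⁻¹zX⁻¹ - z` and `P⁻¹zP⁻¹ - z`,
i.e. by `s(a)b - ba` for the involution `s : X ↦ X⁻¹, P ↦ P⁻¹`; the quotient by it is
the twisted trace space `HH₀(D_q, sD_q)`. -/
noncomputable def twistedCommSpace (q : ℂ) : Submodule ℂ (QTorus q) :=
  Submodule.span ℂ
    ({x | ∃ z : QTorus q, x = XgenInv q * z * XgenInv q - z} ∪
     {x | ∃ z : QTorus q, x = PgenInv q * z * PgenInv q - z})

namespace QTAux
variable (q : ℂ)

lemma rel_xxi : Xgen q * XgenInv q = 1 := by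
  have := RingQuot.mkAlgHom_rel ℂ (QTRel.x_xinv (q := q))
  simpa [Xgen, XgenInv, map_mul, map_one] using this

lemma rel_xix : XgenInv q * Xgen q = 1 := by
  have := RingQuot.mkAlgHom_rel ℂ (QTRel.xinv_x (q := q))
  simpa [Xgen, XgenInv, map_mul, map_one] using this

lemma rel_ppi : Pgen q * PgenInv q = 1 := by
  have := RingQuot.mkAlgHom_rel ℂ (QTRel.p_pinv (q := q))
  simpa [Pgen, PgenInv, map_mul, map_one] using this

lemma rel_pip : PgenInv q * Pgen q = 1 := by
  have := RingQuot.mkAlgHom_rel ℂ (QTRel.pinv_p (q := q))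
  simpa [Pgen, PgenInv, map_mul, map_one] using this

lemma rel_px : Pgen q * Xgen q = q • (Xgen q * Pgen q) := by
  have := RingQuot.mkAlgHom_rel ℂ (QTRel.px_qxp (q := q))
  simpa [Pgen, Xgen, map_mul, map_smul] using this

noncomputable def uX : (QTorus q)ˣ := ⟨Xgen q, XgenInv q, rel_xxi q, rel_xix q⟩
noncomputable def uP : (QTorus q)ˣ := ⟨Pgen q, PgenInv q, rel_ppi q, rel_pip q⟩

lemma uX_inv_val : ((uX q)⁻¹ : (QTorus q)ˣ) = (XgenInv q : QTorus q) := rfl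
lemma uP_inv_val : ((uP q)⁻¹ : (QTorus q)ˣ) = (PgenInv q : QTorus q) := rfl

variable {q}

lemma rel_pxi (hq : q ≠ 0) : Pgen q * XgenInv q = q⁻¹ • (XgenInv q * Pgen q) := by
  have h := rel_px q
  have h2 : XgenInv q * (Pgen q * Xgen q) * XgenInv q
      = XgenInv q * (q • (Xgen q * Pgen q)) * XgenInv q := by rw [h]
  have h3 : XgenInv q * Pgen q = q • (Pgen q * XgenInv q) := by
    calc XgenInv q * Pgen q
        = XgenInv q * (Pgen q * Xgen q) * XgenInv q := by
          rw [← mul_assoc, mul_assoc _ (Xgen q) (XgenInv q), rel_xxi, mul_one]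
      _ = XgenInv q * (q • (Xgen q * Pgen q)) * XgenInv q := h2
      _ = q • (Pgen q * XgenInv q) := by
          rw [mul_smul_comm, smul_mul_assoc]
          congr 1
          rw [← mul_assoc (XgenInv q), rel_xix, one_mul]
  rw [h3, smul_smul, inv_mul_cancel₀ hq, one_smul]

lemma p_xk (hq : q ≠ 0) : ∀ k : ℤ, Pgen q * ↑(uX q ^ k) = (q ^ k) • (↑(uX q ^ k) * Pgen q) := by
  intro k
  induction k using Int.induction_on with
  | zero => simp
  | succ n ih =>
      rw [zpow_add_one, Units.val_mul, ← mul_assoc, ih]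
      show q ^ (n : ℤ) • (↑(uX q ^ (n:ℤ)) * Pgen q) * (uX q : QTorus q) = _
      rw [smul_mul_assoc, mul_assoc]
      show q ^ (n : ℤ) • (↑(uX q ^ (n:ℤ)) * (Pgen q * Xgen q)) = _
      rw [rel_px q, mul_smul_comm, smul_smul, ← zpow_add_one₀ hq, ← mul_assoc]
      rfl
  | pred n ih =>
      rw [show (-(n:ℤ) - 1) = (-(n:ℤ)) + (-1) by ring, zpow_add, Units.val_mul, ← mul_assoc, ih]
      rw [zpow_neg_one, uX_inv_val, smul_mul_assoc, mul_assoc, rel_pxi hq]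
      rw [mul_smul_comm, smul_smul, ← mul_assoc]
      rw [show q ^ (-(n:ℤ)) * q⁻¹ = q ^ (-(n:ℤ) + (-1)) by
        rw [zpow_add₀ hq, zpow_neg_one]]


lemma pi_xk (hq : q ≠ 0) (k : ℤ) :
    PgenInv q * ↑(uX q ^ k) = (q ^ (-k)) • (↑(uX q ^ k) * PgenInv q) := by
  have h := p_xk hq k
  have h2 : ↑(uX q ^ k) * PgenInv q = q ^ k • (PgenInv q * ↑(uX q ^ k)) := by
    calc (↑(uX q ^ k) : QTorus q) * PgenInv q
        = PgenInv q * (Pgen q * ↑(uX q ^ k)) * PgenInv q := by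
          rw [← mul_assoc, rel_pip, one_mul]
      _ = PgenInv q * (q ^ k • (↑(uX q ^ k) * Pgen q)) * PgenInv q := by rw [h]
      _ = q ^ k • (PgenInv q * ↑(uX q ^ k)) := by
          rw [mul_smul_comm, smul_mul_assoc]
          congr 1
          rw [mul_assoc, mul_assoc, rel_ppi, mul_one]
  rw [h2, smul_smul, ← zpow_add₀ hq]
  rw [show -k + k = 0 by ring, zpow_zero, one_smul]

lemma pl_xk (hq : q ≠ 0) (l k : ℤ) :
    (↑(uP q ^ l) : QTorus q) * ↑(uX q ^ k) = (q ^ (k * l)) • (↑(uX q ^ k) * ↑(uP q ^ l)) := by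
  induction l using Int.induction_on with
  | zero => simp
  | succ n ih =>
      rw [zpow_add_one, Units.val_mul, mul_assoc]
      show (↑(uP q ^ (n:ℤ)) : QTorus q) * (Pgen q * ↑(uX q ^ k)) = _
      rw [p_xk hq k, mul_smul_comm, ← mul_assoc, ih, smul_mul_assoc, smul_smul,
        ← zpow_add₀ hq, mul_assoc]
      rw [show k + k * (n:ℤ) = k * ((n:ℤ)+1) by ring]
      rfl
  | pred n ih =>
      rw [show (-(n:ℤ) - 1) = (-(n:ℤ)) + (-1) by ring, zpow_add, Units.val_mul, mul_assoc,
        zpow_neg_one]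
      show (↑(uP q ^ (-(n:ℤ))) : QTorus q) * (PgenInv q * ↑(uX q ^ k)) = _
      rw [pi_xk hq k, mul_smul_comm, ← mul_assoc, ih, smul_mul_assoc, smul_smul,
        ← zpow_add₀ hq, mul_assoc]
      rw [show -k + k * (-(n:ℤ)) = k * ((-(n:ℤ)) + (-1)) by ring]
      rfl

variable (q) in
/-- the monomial `X^k P^l` -/
noncomputable def mon (k l : ℤ) : QTorus q := ↑(uX q ^ k) * ↑(uP q ^ l)

lemma mon_mul (hq : q ≠ 0) (k l k' l' : ℤ) :
    mon q k l * mon q k' l' = (q ^ (k' * l)) • mon q (k + k') (l + l') := by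
  unfold mon
  calc (↑(uX q ^ k) * ↑(uP q ^ l) : QTorus q) * (↑(uX q ^ k') * ↑(uP q ^ l'))
      = ↑(uX q ^ k) * ((↑(uP q ^ l) * ↑(uX q ^ k')) * ↑(uP q ^ l')) := by
        rw [mul_assoc, mul_assoc]
    _ = (q ^ (k' * l)) • (↑(uX q ^ k) * (↑(uX q ^ k') * (↑(uP q ^ l) * ↑(uP q ^ l')))) := by
        rw [pl_xk hq l k', smul_mul_assoc, mul_smul_comm, mul_assoc]
    _ = (q ^ (k' * l)) • (↑(uX q ^ (k + k')) * ↑(uP q ^ (l + l'))) := by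
        congr 1
        rw [← mul_assoc, ← Units.val_mul, ← Units.val_mul, ← zpow_add, ← zpow_add]

lemma mon_zero_zero : mon q 0 0 = 1 := by simp [mon]
lemma mon_one_zero : mon q 1 0 = Xgen q := by simp [mon]; rfl
lemma mon_zero_one : mon q 0 1 = Pgen q := by simp [mon]; rfl
lemma mon_one_one : mon q 1 1 = Xgen q * Pgen q := by simp [mon]; rfl
lemma mon_negone_zero : mon q (-1) 0 = XgenInv q := by simp [mon, zpow_neg_one]; rfl
lemma mon_zero_negone : mon q 0 (-1) = PgenInv q := by simp [mon, zpow_neg_one]; rfl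

lemma red_x (hq : q ≠ 0) (k l : ℤ) :
    XgenInv q * mon q k l * XgenInv q = (q ^ (-l)) • mon q (k - 2) l := by
  rw [← mon_negone_zero (q := q), mon_mul hq, smul_mul_assoc, mon_mul hq, smul_smul]
  rw [show (-1:ℤ) + k + -1 = k - 2 by ring, show (0:ℤ) + l + 0 = l by ring]
  congr 1
  rw [← zpow_add₀ hq]
  congr 1
  ring

lemma red_p (hq : q ≠ 0) (k l : ℤ) :
    PgenInv q * mon q k l * PgenInv q = (q ^ (-k)) • mon q k (l - 2) := by
  rw [← mon_zero_negone (q := q), mon_mul hq, smul_mul_assoc, mon_mul hq, smul_smul]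
  rw [show (0:ℤ) + k + 0 = k by ring, show (-1:ℤ) + l + -1 = l - 2 by ring]
  congr 1
  rw [← zpow_add₀ hq]
  congr 1
  ring


variable (q) in
noncomputable def Msub : Submodule ℂ (QTorus q) :=
  Submodule.span ℂ (Set.range fun p : ℤ × ℤ => mon q p.1 p.2)

lemma mon_mem (k l : ℤ) : mon q k l ∈ Msub q := Submodule.subset_span ⟨(k, l), rfl⟩

lemma Msub_mul (hq : q ≠ 0) {x y : QTorus q} (hx : x ∈ Msub q) (hy : y ∈ Msub q) :
    x * y ∈ Msub q := by
  have h : Msub q * Msub q ≤ Msub q := by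
    rw [Msub, Submodule.span_mul_span, Submodule.span_le]
    rintro z ⟨s, ⟨p, rfl⟩, t, ⟨p', rfl⟩, rfl⟩
    show mon q p.1 p.2 * mon q p'.1 p'.2 ∈ _
    rw [mon_mul hq]
    exact Submodule.smul_mem _ _ (mon_mem _ _)
  exact h (Submodule.mul_mem_mul hx hy)

lemma Msub_top (hq : q ≠ 0) : Msub q = ⊤ := by
  rw [eq_top_iff]
  rintro x -
  obtain ⟨y, rfl⟩ := RingQuot.mkAlgHom_surjective ℂ (QTRel q) x
  induction y using FreeAlgebra.induction with
  | grade0 r =>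
      rw [AlgHom.commutes, Algebra.algebraMap_eq_smul_one, ← mon_zero_zero (q := q)]
      exact Submodule.smul_mem _ _ (mon_mem _ _)
  | grade1 i =>
      fin_cases i
      · show Xgen q ∈ Msub q
        rw [← mon_one_zero]; exact mon_mem _ _
      · show XgenInv q ∈ Msub q
        rw [← mon_negone_zero]; exact mon_mem _ _
      · show Pgen q ∈ Msub q
        rw [← mon_zero_one]; exact mon_mem _ _
      · show PgenInv q ∈ Msub q
        rw [← mon_zero_negone]; exact mon_mem _ _
  | mul a b ha hb => rw [map_mul]; exact Msub_mul hq ha hb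
  | add a b ha hb => rw [map_add]; exact add_mem ha hb

local notation "mk" => Submodule.Quotient.mk (p := twistedCommSpace q)

lemma qrel_x (hq : q ≠ 0) (k l : ℤ) :
    mk (mon q (k + 2) l) = (q ^ (-l)) • mk (mon q k l) := by
  rw [← Submodule.Quotient.mk_smul, Submodule.Quotient.eq]
  have hmem : (q ^ (-l)) • mon q k l - mon q (k + 2) l ∈ twistedCommSpace q := by
    have h := red_x hq (k + 2) l
    rw [show k + 2 - 2 = k by ring] at h
    exact Submodule.subset_span (Or.inl ⟨mon q (k + 2) l, by rw [h]⟩)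
  have := (twistedCommSpace q).neg_mem hmem
  rwa [neg_sub] at this

lemma qrel_p (hq : q ≠ 0) (k l : ℤ) :
    mk (mon q k (l + 2)) = (q ^ (-k)) • mk (mon q k l) := by
  rw [← Submodule.Quotient.mk_smul, Submodule.Quotient.eq]
  have hmem : (q ^ (-k)) • mon q k l - mon q k (l + 2) ∈ twistedCommSpace q := by
    have h := red_p hq k (l + 2)
    rw [show l + 2 - 2 = l by ring] at h
    exact Submodule.subset_span (Or.inr ⟨mon q k (l + 2), by rw [h]⟩)
  have := (twistedCommSpace q).neg_mem hmem
  rwa [neg_sub] at this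

lemma qrel_x' (hq : q ≠ 0) (k l : ℤ) :
    mk (mon q k l) = (q ^ l) • mk (mon q (k + 2) l) := by
  rw [qrel_x hq k l, smul_smul, ← zpow_add₀ hq, show l + -l = 0 by ring, zpow_zero, one_smul]

lemma qrel_p' (hq : q ≠ 0) (k l : ℤ) :
    mk (mon q k l) = (q ^ k) • mk (mon q k (l + 2)) := by
  rw [qrel_p hq k l, smul_smul, ← zpow_add₀ hq, show k + -k = 0 by ring, zpow_zero, one_smul]

lemma int2ind {Q : ℤ → Prop} (h0 : Q 0) (h1 : Q 1) (hup : ∀ k, Q k → Q (k + 2))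
    (hdn : ∀ k, Q k → Q (k - 2)) (k : ℤ) : Q k := by
  have key : ∀ n : ℤ, Q n ∧ Q (n + 1) := by
    intro n
    induction n using Int.induction_on with
    | zero => exact ⟨h0, by rwa [zero_add]⟩
    | succ m ih =>
        refine ⟨ih.2, ?_⟩
        have := hup m ih.1
        rwa [show (m : ℤ) + 2 = (m : ℤ) + 1 + 1 by ring] at this
    | pred m ih =>
        refine ⟨?_, ?_⟩
        · have := hdn (-(m : ℤ) + 1) ih.2
          rwa [show -(m : ℤ) + 1 - 2 = -(m : ℤ) - 1 by ring] at this
        · have := ih.1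
          rwa [show -(m : ℤ) = -(m : ℤ) - 1 + 1 by ring] at this
  exact (key k).1

lemma redk (hq : q ≠ 0) (l : ℤ) (k : ℤ) :
    mk (mon q k l) ∈ Submodule.span ℂ {mk (mon q 0 l), mk (mon q 1 l)} := by
  induction k using int2ind with
  | h0 => exact Submodule.subset_span (Set.mem_insert _ _)
  | h1 => exact Submodule.subset_span (Set.mem_insert_of_mem _ rfl)
  | hup k hk => rw [qrel_x hq k l]; exact Submodule.smul_mem _ _ hk
  | hdn k hk =>
      have h := qrel_x' hq (k - 2) l
      rw [show k - 2 + 2 = k by ring] at h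
      rw [h]; exact Submodule.smul_mem _ _ hk

lemma redl (hq : q ≠ 0) (k : ℤ) (l : ℤ) :
    mk (mon q k l) ∈ Submodule.span ℂ {mk (mon q k 0), mk (mon q k 1)} := by
  induction l using int2ind with
  | h0 => exact Submodule.subset_span (Set.mem_insert _ _)
  | h1 => exact Submodule.subset_span (Set.mem_insert_of_mem _ rfl)
  | hup l hl => rw [qrel_p hq k l]; exact Submodule.smul_mem _ _ hl
  | hdn l hl =>
      have h := qrel_p' hq k (l - 2)
      rw [show l - 2 + 2 = l by ring] at h
      rw [h]; exact Submodule.smul_mem _ _ hl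

variable (q) in
noncomputable def span4 : Submodule ℂ (QTorus q ⧸ twistedCommSpace q) :=
  Submodule.span ℂ
    {x | x = mk (1 : QTorus q) ∨ x = mk (Xgen q) ∨ x = mk (Pgen q) ∨
      x = mk (Xgen q * Pgen q)}

lemma pair_le {A B : QTorus q ⧸ twistedCommSpace q} (hA : A ∈ span4 q) (hB : B ∈ span4 q) :
    Submodule.span ℂ {A, B} ≤ span4 q := by
  rw [Submodule.span_le]
  rintro x (rfl | rfl)
  · exact hA
  · exact hB

lemma mon_mem_span4 (hq : q ≠ 0) (k l : ℤ) : mk (mon q k l) ∈ span4 q := by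
  have h00 : mk (mon q 0 0) ∈ span4 q := by
    apply Submodule.subset_span; left; rw [mon_zero_zero]
  have h10 : mk (mon q 1 0) ∈ span4 q := by
    apply Submodule.subset_span; right; left; rw [mon_one_zero]
  have h01 : mk (mon q 0 1) ∈ span4 q := by
    apply Submodule.subset_span; right; right; left; rw [mon_zero_one]
  have h11 : mk (mon q 1 1) ∈ span4 q := by
    apply Submodule.subset_span; right; right; right; rw [mon_one_one]
  have h0l : mk (mon q 0 l) ∈ span4 q := pair_le h00 h01 (redl hq 0 l)
  have h1l : mk (mon q 1 l) ∈ span4 q := pair_le h10 h11 (redl hq 1 l)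
  exact pair_le h0l h1l (redk hq l k)

lemma span4_top (hq : q ≠ 0) : span4 q = ⊤ := by
  rw [eq_top_iff]
  rintro x -
  obtain ⟨z, rfl⟩ := Submodule.Quotient.mk_surjective _ x
  have hz : z ∈ Msub q := by rw [Msub_top hq]; trivial
  refine Submodule.span_induction (p := fun z _ => mk z ∈ span4 q) ?_ ?_ ?_ ?_ hz
  · rintro _ ⟨p, rfl⟩; exact mon_mem_span4 hq p.1 p.2
  · simpa using (span4 q).zero_mem
  · intro a b _ _ ha hb
    rw [Submodule.Quotient.mk_add]; exact Submodule.add_mem _ ha hb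
  · intro c a _ ha
    rw [Submodule.Quotient.mk_smul]; exact Submodule.smul_mem _ _ ha


abbrev Vq := (ℤ × ℤ) →₀ ℂ

noncomputable def sOp (c : ℤ × ℤ → ℂ) (g : ℤ × ℤ → ℤ × ℤ) : Vq →ₗ[ℂ] Vq :=
  Finsupp.lsum ℂ fun p => LinearMap.toSpanSingleton ℂ Vq (c p • Finsupp.single (g p) 1)

lemma sOp_single (c : ℤ × ℤ → ℂ) (g : ℤ × ℤ → ℤ × ℤ) (p : ℤ × ℤ) (a : ℂ) :
    sOp c g (Finsupp.single p a) = (a * c p) • Finsupp.single (g p) 1 := by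
  rw [sOp, Finsupp.lsum_single, LinearMap.toSpanSingleton_apply, smul_smul]

noncomputable def oX : Vq →ₗ[ℂ] Vq := sOp (fun _ => 1) (fun p => (p.1 + 1, p.2))
noncomputable def oXi : Vq →ₗ[ℂ] Vq := sOp (fun _ => 1) (fun p => (p.1 - 1, p.2))
variable (q) in
noncomputable def oP : Vq →ₗ[ℂ] Vq := sOp (fun p => q ^ p.1) (fun p => (p.1, p.2 + 1))
variable (q) in
noncomputable def oPi : Vq →ₗ[ℂ] Vq := sOp (fun p => q ^ (-p.1)) (fun p => (p.1, p.2 - 1))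

variable (q) in
noncomputable def Ff : FreeAlgebra ℂ (Fin 4) →ₐ[ℂ] Module.End ℂ Vq :=
  FreeAlgebra.lift ℂ ![oX, oXi, oP q, oPi q]

lemma Ff_rel (hq : q ≠ 0) : ∀ ⦃x y : FreeAlgebra ℂ (Fin 4)⦄, QTRel q x y → Ff q x = Ff q y := by
  intro x y h
  cases h with
  | x_xinv =>
      simp only [map_mul, map_one, Ff, FreeAlgebra.lift_ι_apply]
      refine Finsupp.lhom_ext fun p a => ?_
      show oX (oXi (Finsupp.single p a)) = Finsupp.single p a
      rw [oXi, sOp_single, map_smul, oX, sOp_single]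
      simp [Finsupp.smul_single]
  | xinv_x =>
      simp only [map_mul, map_one, Ff, FreeAlgebra.lift_ι_apply]
      refine Finsupp.lhom_ext fun p a => ?_
      show oXi (oX (Finsupp.single p a)) = Finsupp.single p a
      rw [oX, sOp_single, map_smul, oXi, sOp_single]
      simp [Finsupp.smul_single]
  | p_pinv =>
      simp only [map_mul, map_one, Ff, FreeAlgebra.lift_ι_apply]
      refine Finsupp.lhom_ext fun p a => ?_
      show oP q (oPi q (Finsupp.single p a)) = Finsupp.single p a
      rw [oPi, sOp_single, map_smul, oP, sOp_single]
      simp only [Finsupp.smul_single, smul_eq_mul, one_mul, mul_one]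
      rw [mul_assoc, ← zpow_add₀ hq]
      simp
  | pinv_p =>
      simp only [map_mul, map_one, Ff, FreeAlgebra.lift_ι_apply]
      refine Finsupp.lhom_ext fun p a => ?_
      show oPi q (oP q (Finsupp.single p a)) = Finsupp.single p a
      rw [oP, sOp_single, map_smul, oPi, sOp_single]
      simp only [Finsupp.smul_single, smul_eq_mul, one_mul, mul_one]
      rw [mul_assoc, ← zpow_add₀ hq]
      simp
  | px_qxp =>
      simp only [map_mul, map_smul, Ff, FreeAlgebra.lift_ι_apply]
      refine Finsupp.lhom_ext fun p a => ?_
      show oP q (oX (Finsupp.single p a)) = q • (oX (oP q (Finsupp.single p a)))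
      simp only [oX, oP, map_smul, sOp_single, Finsupp.smul_single, smul_eq_mul, mul_one,
        one_mul, smul_smul]
      rw [zpow_add_one₀ hq]
      ring_nf


lemma oX_single (p : ℤ × ℤ) (a : ℂ) :
    oX (Finsupp.single p a) = Finsupp.single (p.1 + 1, p.2) a := by
  rw [oX, sOp_single]; simp [Finsupp.smul_single]

lemma oXi_single (p : ℤ × ℤ) (a : ℂ) :
    oXi (Finsupp.single p a) = Finsupp.single (p.1 - 1, p.2) a := by
  rw [oXi, sOp_single]; simp [Finsupp.smul_single]

lemma oP_single (p : ℤ × ℤ) (a : ℂ) :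
    oP q (Finsupp.single p a) = (q ^ p.1) • Finsupp.single (p.1, p.2 + 1) a := by
  rw [oP, sOp_single, mul_comm, ← smul_smul]; simp [Finsupp.smul_single]

lemma oPi_single (p : ℤ × ℤ) (a : ℂ) :
    oPi q (Finsupp.single p a) = (q ^ (-p.1)) • Finsupp.single (p.1, p.2 - 1) a := by
  rw [oPi, sOp_single, mul_comm, ← smul_smul]; simp [Finsupp.smul_single]

variable (q) in
noncomputable def rho (hq : q ≠ 0) : QTorus q →ₐ[ℂ] Module.End ℂ Vq :=
  RingQuot.liftAlgHom ℂ ⟨Ff q, Ff_rel hq⟩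

lemma rho_X (hq : q ≠ 0) : rho q hq (Xgen q) = oX := by
  rw [rho, Xgen, RingQuot.liftAlgHom_mkAlgHom_apply, Ff, FreeAlgebra.lift_ι_apply]
  simp

lemma rho_Xi (hq : q ≠ 0) : rho q hq (XgenInv q) = oXi := by
  rw [rho, XgenInv, RingQuot.liftAlgHom_mkAlgHom_apply, Ff, FreeAlgebra.lift_ι_apply]
  simp

lemma rho_P (hq : q ≠ 0) : rho q hq (Pgen q) = oP q := by
  rw [rho, Pgen, RingQuot.liftAlgHom_mkAlgHom_apply, Ff, FreeAlgebra.lift_ι_apply]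
  simp

lemma rho_Pi (hq : q ≠ 0) : rho q hq (PgenInv q) = oPi q := by
  rw [rho, PgenInv, RingQuot.liftAlgHom_mkAlgHom_apply, Ff, FreeAlgebra.lift_ι_apply]
  simp

lemma rho_uX (hq : q ≠ 0) (k : ℤ) : ∀ (p : ℤ × ℤ) (a : ℂ),
    rho q hq ↑(uX q ^ k) (Finsupp.single p a) = Finsupp.single (p.1 + k, p.2) a := by
  induction k using Int.induction_on with
  | zero => simp
  | succ n ih =>
      intro p a
      rw [zpow_add_one, Units.val_mul, map_mul, Module.End.mul_apply]
      rw [show ((uX q : (QTorus q)ˣ) : QTorus q) = Xgen q from rfl, rho_X hq, oX_single,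
        ih (p.1 + 1, p.2) a]
      congr 2
      ring
  | pred n ih =>
      intro p a
      rw [show (-(n:ℤ) - 1) = (-(n:ℤ)) + (-1) by ring, zpow_add, Units.val_mul, map_mul,
        Module.End.mul_apply, zpow_neg_one, uX_inv_val, rho_Xi hq, oXi_single,
        ih (p.1 - 1, p.2) a]
      congr 2
      ring

lemma rho_uP (hq : q ≠ 0) (l : ℤ) : ∀ (p : ℤ × ℤ) (a : ℂ),
    rho q hq ↑(uP q ^ l) (Finsupp.single p a)
      = (q ^ (l * p.1)) • Finsupp.single (p.1, p.2 + l) a := by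
  induction l using Int.induction_on with
  | zero => simp
  | succ n ih =>
      intro p a
      rw [zpow_add_one, Units.val_mul, map_mul, Module.End.mul_apply]
      rw [show ((uP q : (QTorus q)ˣ) : QTorus q) = Pgen q from rfl, rho_P hq, oP_single,
        map_smul, ih (p.1, p.2 + 1) a, smul_smul, ← zpow_add₀ hq]
      rw [show p.1 + (n:ℤ) * p.1 = ((n:ℤ) + 1) * p.1 by ring]
      congr 2
      ring
  | pred n ih =>
      intro p a
      rw [show (-(n:ℤ) - 1) = (-(n:ℤ)) + (-1) by ring, zpow_add, Units.val_mul, map_mul,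
        Module.End.mul_apply, zpow_neg_one, uP_inv_val, rho_Pi hq, oPi_single,
        map_smul, ih (p.1, p.2 - 1) a, smul_smul, ← zpow_add₀ hq]
      rw [show -p.1 + -(n:ℤ) * p.1 = (-(n:ℤ) + -1) * p.1 by ring]
      congr 2
      ring

lemma rho_mon (hq : q ≠ 0) (k l : ℤ) :
    rho q hq (mon q k l) (Finsupp.single ((0:ℤ), (0:ℤ)) (1:ℂ)) = Finsupp.single (k, l) 1 := by
  rw [mon, map_mul, Module.End.mul_apply, rho_uP hq, map_smul, rho_uX hq]
  simp

abbrev Wsp := ZMod 2 × ZMod 2 → ℂ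

def idx (k l : ℤ) : ZMod 2 × ZMod 2 := ((k : ZMod 2), (l : ZMod 2))

def eexp (k l : ℤ) : ℤ :=
  -(k % 2 * (l / 2) + l % 2 * (k / 2) + 2 * (k / 2) * (l / 2))

variable (q) in
noncomputable def Gfun (p : ℤ × ℤ) : Wsp :=
  (q ^ eexp p.1 p.2) • (Pi.single (idx p.1 p.2) (1:ℂ) : Wsp)

variable (q) in
noncomputable def Psi : Vq →ₗ[ℂ] Wsp :=
  Finsupp.lsum ℂ fun p => LinearMap.toSpanSingleton ℂ Wsp (Gfun q p)

variable (q) in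
noncomputable def Phi (hq : q ≠ 0) : QTorus q →ₗ[ℂ] Wsp where
  toFun z := Psi q (rho q hq z (Finsupp.single ((0:ℤ), (0:ℤ)) (1:ℂ)))
  map_add' a b := by simp only [map_add, LinearMap.add_apply]
  map_smul' c a := by simp only [map_smul, LinearMap.smul_apply, RingHom.id_apply]

lemma Phi_apply (hq : q ≠ 0) (z : QTorus q) :
    Phi q hq z = Psi q (rho q hq z (Finsupp.single ((0:ℤ), (0:ℤ)) (1:ℂ))) := rfl

lemma Phi_mon (hq : q ≠ 0) (k l : ℤ) :
    Phi q hq (mon q k l) = (q ^ eexp k l) • (Pi.single (idx k l) (1:ℂ) : Wsp) := by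
  rw [Phi_apply, rho_mon hq, Psi, Finsupp.lsum_single, LinearMap.toSpanSingleton_apply,
    one_smul, Gfun]

lemma two_zmod_zero : (2 : ZMod 2) = 0 := by decide

lemma idx_ksub (k l : ℤ) : idx (k - 2) l = idx k l := by
  unfold idx
  congr 1
  push_cast
  rw [two_zmod_zero, sub_zero]

lemma idx_lsub (k l : ℤ) : idx k (l - 2) = idx k l := by
  unfold idx
  congr 1
  push_cast
  rw [two_zmod_zero, sub_zero]

lemma e_ksub (k l : ℤ) : eexp k l = -l + eexp (k - 2) l := by
  have h1 : (k - 2) % 2 = k % 2 := by omega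
  have h2 : (k - 2) / 2 = k / 2 - 1 := by omega
  have h3 : l % 2 + 2 * (l / 2) = l := Int.emod_add_mul_ediv l 2
  unfold eexp
  rw [h1, h2]
  linear_combination -h3

lemma e_lsub (k l : ℤ) : eexp k l = -k + eexp k (l - 2) := by
  have h1 : (l - 2) % 2 = l % 2 := by omega
  have h2 : (l - 2) / 2 = l / 2 - 1 := by omega
  have h3 : k % 2 + 2 * (k / 2) = k := Int.emod_add_mul_ediv k 2
  unfold eexp
  rw [h1, h2]
  linear_combination -h3

lemma kill_x (hq : q ≠ 0) (z : QTorus q) :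
    Phi q hq (XgenInv q * z * XgenInv q) = Phi q hq z := by
  have hz : z ∈ Msub q := by rw [Msub_top hq]; trivial
  refine Submodule.span_induction
    (p := fun z _ => Phi q hq (XgenInv q * z * XgenInv q) = Phi q hq z) ?_ ?_ ?_ ?_ hz
  · rintro _ ⟨p, rfl⟩
    show Phi q hq (XgenInv q * mon q p.1 p.2 * XgenInv q) = Phi q hq (mon q p.1 p.2)
    rw [red_x hq, map_smul, Phi_mon hq, Phi_mon hq, idx_ksub, smul_smul, ← zpow_add₀ hq,
      ← e_ksub]
  · simp
  · intro a b _ _ ha hb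
    rw [mul_add, add_mul, map_add, map_add, ha, hb]
  · intro c a _ ha
    rw [mul_smul_comm, smul_mul_assoc, map_smul, map_smul, ha]

lemma kill_p (hq : q ≠ 0) (z : QTorus q) :
    Phi q hq (PgenInv q * z * PgenInv q) = Phi q hq z := by
  have hz : z ∈ Msub q := by rw [Msub_top hq]; trivial
  refine Submodule.span_induction
    (p := fun z _ => Phi q hq (PgenInv q * z * PgenInv q) = Phi q hq z) ?_ ?_ ?_ ?_ hz
  · rintro _ ⟨p, rfl⟩
    show Phi q hq (PgenInv q * mon q p.1 p.2 * PgenInv q) = Phi q hq (mon q p.1 p.2)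
    rw [red_p hq, map_smul, Phi_mon hq, Phi_mon hq, idx_lsub, smul_smul, ← zpow_add₀ hq,
      ← e_lsub]
  · simp
  · intro a b _ _ ha hb
    rw [mul_add, add_mul, map_add, map_add, ha, hb]
  · intro c a _ ha
    rw [mul_smul_comm, smul_mul_assoc, map_smul, map_smul, ha]

lemma tcs_le_ker (hq : q ≠ 0) : twistedCommSpace q ≤ LinearMap.ker (Phi q hq) := by
  rw [twistedCommSpace, Submodule.span_le]
  rintro x (⟨z, rfl⟩ | ⟨z, rfl⟩) <;>
    simp only [SetLike.mem_coe, LinearMap.mem_ker, map_sub, kill_x hq, kill_p hq, sub_self]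

end QTAux


/-- For `q` not a root of unity, the twisted trace space
`HH₀(D_q, sD_q) = D_q / span{s(a)b - ba}` is 4-dimensional, spanned by the classes of
the monomials `X^{ε₁}P^{ε₂}`, `ε₁, ε₂ ∈ {0,1}`: the classes of `1, X, P, XP` span the
quotient and are linearly independent. -/
theorem quantum_torus_twisted_HH0 (q : ℂ) (hq : q ≠ 0)
    (hroot : ∀ n : ℕ, 0 < n → q ^ n ≠ 1) :
    (Submodule.span ℂ
        {x : QTorus q ⧸ twistedCommSpace q |
          x = Submodule.Quotient.mk (1 : QTorus q) ∨
          x = Submodule.Quotient.mk (Xgen q) ∨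
          x = Submodule.Quotient.mk (Pgen q) ∨
          x = Submodule.Quotient.mk (Xgen q * Pgen q)} = ⊤) ∧
    LinearIndependent ℂ
      ![(Submodule.Quotient.mk (1 : QTorus q) : QTorus q ⧸ twistedCommSpace q),
        Submodule.Quotient.mk (Xgen q),
        Submodule.Quotient.mk (Pgen q),
        Submodule.Quotient.mk (Xgen q * Pgen q)] := by
  constructor
  · exact QTAux.span4_top hq
  · set Phibar : (QTorus q ⧸ twistedCommSpace q) →ₗ[ℂ] QTAux.Wsp :=
      Submodule.liftQ (twistedCommSpace q) (QTAux.Phi q hq) (QTAux.tcs_le_ker hq) with hPhibar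
    apply LinearIndependent.of_comp Phibar
    have hval : ∀ k l : ℤ, Phibar (Submodule.Quotient.mk (QTAux.mon q k l))
        = (q ^ QTAux.eexp k l) • (Pi.single (QTAux.idx k l) (1:ℂ) : QTAux.Wsp) := by
      intro k l
      rw [hPhibar, Submodule.liftQ_apply, QTAux.Phi_mon hq]
    have hcomp : ⇑Phibar ∘
        ![(Submodule.Quotient.mk (1 : QTorus q) : QTorus q ⧸ twistedCommSpace q),
          Submodule.Quotient.mk (Xgen q),
          Submodule.Quotient.mk (Pgen q),
          Submodule.Quotient.mk (Xgen q * Pgen q)]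
        = (fun p : ZMod 2 × ZMod 2 => (Pi.single p (1:ℂ) : QTAux.Wsp)) ∘
          ![(0,0),(1,0),(0,1),(1,1)] := by
      funext i
      fin_cases i
      · show Phibar (Submodule.Quotient.mk (1 : QTorus q)) = _
        rw [← QTAux.mon_zero_zero (q := q), hval]
        rw [show QTAux.eexp 0 0 = 0 by decide, zpow_zero, one_smul]
        rfl
      · show Phibar (Submodule.Quotient.mk (Xgen q)) = _
        rw [← QTAux.mon_one_zero (q := q), hval]
        rw [show QTAux.eexp 1 0 = 0 by decide, zpow_zero, one_smul]
        rfl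
      · show Phibar (Submodule.Quotient.mk (Pgen q)) = _
        rw [← QTAux.mon_zero_one (q := q), hval]
        rw [show QTAux.eexp 0 1 = 0 by decide, zpow_zero, one_smul]
        rfl
      · show Phibar (Submodule.Quotient.mk (Xgen q * Pgen q)) = _
        rw [← QTAux.mon_one_one (q := q), hval]
        rw [show QTAux.eexp 1 1 = 0 by decide, zpow_zero, one_smul]
        rfl
    rw [hcomp]
    have hbasis : LinearIndependent ℂ
        (fun p : ZMod 2 × ZMod 2 => (Pi.single p (1:ℂ) : QTAux.Wsp)) := by
      have h := (Pi.basisFun ℂ (ZMod 2 × ZMod 2)).linearIndependent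
      have : ⇑(Pi.basisFun ℂ (ZMod 2 × ZMod 2))
          = fun p : ZMod 2 × ZMod 2 => (Pi.single p (1:ℂ) : QTAux.Wsp) := by
        funext p
        rw [Pi.basisFun_apply]
      rwa [this] at h
    exact hbasis.comp _ (by decide)
end

section
/- Let C_s = {X_1 X_2 X_3 - X_1^2 - X_2^2 - X_3^2 + p_1 X_1 + p_2 X_2 + p_3 X_3 + p_0 + 4 = 0} with p_i = ε_i s for i=1,2,3 (ε_i ∈ {±1}, ε_1 ε_2 ε_3 = 1) and p_0 = s(2 - s/2). Then for s = 0 the surface C_0 has exactly four singular points, namely 2(ε'_1, ε'_2, ε'_3) with ε'_i ∈ {±1} and ε'_1 ε'_2 ε'_3 = 1. -/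
/-- In the family `C_s` with `p_i = ε_i s` (`ε₁ε₂ε₃ = 1`) and
`p₀ = s(2 - s/2)`, at `s = 0` the surface `X₁X₂X₃ = X₁² + X₂² + X₃² - 4` has exactly
four singular points, namely `2(ε'₁, ε'₂, ε'₃)` with `ε'ᵢ = ±1`, `ε'₁ε'₂ε'₃ = 1`. -/
theorem singular_points_of_degenerate_cubic (x₁ x₂ x₃ : ℂ) :
    (x₁ * x₂ * x₃ - x₁ ^ 2 - x₂ ^ 2 - x₃ ^ 2 + 4 = 0 ∧
      x₂ * x₃ - 2 * x₁ = 0 ∧ x₁ * x₃ - 2 * x₂ = 0 ∧ x₁ * x₂ - 2 * x₃ = 0) ↔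
    ((x₁, x₂, x₃) = (2, 2, 2) ∨ (x₁, x₂, x₃) = (2, -2, -2) ∨
      (x₁, x₂, x₃) = (-2, 2, -2) ∨ (x₁, x₂, x₃) = (-2, -2, 2)) := by
  constructor
  · rintro ⟨h1, h2, h3, h4⟩
    have e1 : (x₁ - 2) * (x₁ + 2) = 0 := by
      linear_combination (-1 : ℂ) * h1 + (x₂ / 2) * h3 + (x₃ / 2) * h4
    have e2 : (x₂ - 2) * (x₂ + 2) = 0 := by
      linear_combination (-1 : ℂ) * h1 + (x₁ / 2) * h2 + (x₃ / 2) * h4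
    have e3 : (x₃ - 2) * (x₃ + 2) = 0 := by
      linear_combination (-1 : ℂ) * h1 + (x₁ / 2) * h2 + (x₂ / 2) * h3
    have p8 : x₁ * x₂ * x₃ = 8 := by
      linear_combination (-2 : ℂ) * h1 + x₁ * h2 + x₂ * h3 + x₃ * h4
    have c1 : x₁ = 2 ∨ x₁ = -2 := by
      rcases mul_eq_zero.mp e1 with h | h
      exacts [Or.inl (by linear_combination h), Or.inr (by linear_combination h)]
    have c2 : x₂ = 2 ∨ x₂ = -2 := by
      rcases mul_eq_zero.mp e2 with h | h
      exacts [Or.inl (by linear_combination h), Or.inr (by linear_combination h)]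
    have c3 : x₃ = 2 ∨ x₃ = -2 := by
      rcases mul_eq_zero.mp e3 with h | h
      exacts [Or.inl (by linear_combination h), Or.inr (by linear_combination h)]
    rcases c1 with rfl | rfl <;> rcases c2 with rfl | rfl <;> rcases c3 with rfl | rfl <;>
      (revert p8; norm_num)
  · rintro (h | h | h | h) <;>
      (simp only [Prod.mk.injEq] at h; obtain ⟨a, b, c⟩ := h; subst a; subst b; subst c;
       norm_num)
end
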